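/- arXiv:2002.05045 — 4 statements merged into one kernel-verified Lean document; each statement's English description precedes it below -/
import Mathlib

section
/- With the notation of the previous splitting (a := M₁/2, c := M₀/a with M₁ ≠ 0, M̃₀ := a/√δ + M₀, M̃₁ := -a/√δ, λ̃₀ := λ₀ + √δ, λ̃₁ := λ₀ - √δ + cδ), there exist constants C > 0 and δ₀ > 0 depending only on M₀, M₁ such that for all δ ∈ (0, δ₀]: |M̃₀ (λ̃₀ - λ₀)² + M̃₁ (λ̃₁ - λ₀)²| ≤ C δ, |λ̃ⱼ - λ₀| ≤ C √δ, and |M̃ⱼ| ≤ C/√δ for j = 0, 1. -/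
theorem div_le_div_of_nonneg_right' {x y s : ℝ} (h : x ≤ y) (hs : 0 < s) :
    x / s ≤ y / s := by
  rw [div_le_div_iff₀ hs hs]
  nlinarith

set_option maxHeartbeats 1600000 in
/-- Estimates on the splitting of a double pole into two simple poles. -/
theorem double_pole_splitting_estimates (l₀ M₀ M₁ : ℂ) (hM₁ : M₁ ≠ 0) :
    ∃ C > 0, ∃ δ₀ > 0, ∀ δ : ℝ, 0 < δ → δ ≤ δ₀ →
      let a : ℂ := M₁ / 2
      let c : ℂ := M₀ / a
      let Mt : Fin 2 → ℂ := ![a / (Real.sqrt δ : ℂ) + M₀, -(a / (Real.sqrt δ : ℂ))]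
      let lt : Fin 2 → ℂ := ![l₀ + (Real.sqrt δ : ℂ), l₀ - (Real.sqrt δ : ℂ) + c * (δ : ℂ)]
      ‖Mt 0 * (lt 0 - l₀) ^ 2 + Mt 1 * (lt 1 - l₀) ^ 2‖ ≤ C * δ ∧
        (∀ j : Fin 2, ‖lt j - l₀‖ ≤ C * Real.sqrt δ) ∧
        (∀ j : Fin 2, ‖Mt j‖ ≤ C / Real.sqrt δ) := by
  set A : ℝ := ‖M₁ / 2‖ with hA
  set Cc : ℝ := ‖M₀ / (M₁ / 2)‖ with hCc
  set B : ℝ := ‖M₀‖ with hB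
  refine ⟨3 * B + A * Cc ^ 2 + 1 + Cc + A + B, by positivity, 1, one_pos, ?_⟩
  intro δ hδ hδ1
  intro a c Mt lt
  set s : ℝ := Real.sqrt δ with hsdef
  have hs : 0 < s := Real.sqrt_pos.mpr hδ
  have hss : s * s = δ := Real.mul_self_sqrt hδ.le
  have hs1 : s ≤ 1 := by nlinarith [hss]
  have hds : δ ≤ s := by nlinarith [hss]
  set S : ℂ := (s : ℂ) with hSdef
  have hS : S ≠ 0 := by
    simp only [hSdef, Complex.ofReal_ne_zero]
    exact hs.ne'
  have hS2 : S ^ 2 = (δ : ℂ) := by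
    rw [hSdef, ← Complex.ofReal_pow, sq, hss]
  have ha : a ≠ 0 := div_ne_zero hM₁ two_ne_zero
  have hac : a * c = M₀ := by
    simp only [c]
    field_simp
  have habsS : ‖S‖ = s := by
    rw [hSdef, Complex.norm_real, Real.norm_eq_abs, abs_of_pos hs]
  have habsδ : ‖(δ : ℂ)‖ = δ := by
    rw [Complex.norm_real, Real.norm_eq_abs, abs_of_pos hδ]
  have habsa : ‖a‖ = A := by simp only [a, hA]
  have habsc : ‖c‖ = Cc := by simp only [c, a, hCc]
  have hAnn : 0 ≤ A := norm_nonneg _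
  have hBnn : 0 ≤ B := norm_nonneg _
  have hCcnn : 0 ≤ Cc := norm_nonneg _
  refine ⟨?_, ?_, ?_⟩
  · have key : Mt 0 * (lt 0 - l₀) ^ 2 + Mt 1 * (lt 1 - l₀) ^ 2
        = 3 * M₀ * (δ : ℂ) - a * c ^ 2 * (δ : ℂ) ^ 2 / S := by
      simp only [Mt, lt, Matrix.cons_val_zero, Matrix.cons_val_one, Matrix.head_cons, a, c]
      rw [← hsdef, ← hSdef]
      rw [← hS2]
      field_simp
      ring
    rw [key]
    have h1 : ‖3 * M₀ * (δ : ℂ) - a * c ^ 2 * (δ : ℂ) ^ 2 / S‖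
        ≤ 3 * B * δ + A * Cc ^ 2 * (δ ^ 2 / s) := by
      refine le_trans (norm_sub_le _ _) ?_
      gcongr
      · rw [norm_mul, norm_mul, habsδ]
        simp [hB]
      · have e1 : ‖a * c ^ 2‖ = A * Cc ^ 2 := by
          rw [norm_mul, norm_pow, habsa, habsc]
        rw [norm_div, norm_mul, norm_pow, habsδ, habsS, e1, mul_div_assoc]
    refine h1.trans ?_
    have h2 : δ ^ 2 / s ≤ δ := by
      rw [div_le_iff₀ hs]
      nlinarith
    nlinarith [mul_le_mul_of_nonneg_left h2 (by positivity : (0:ℝ) ≤ A * Cc ^ 2),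
      mul_pos hδ hδ]
  · rw [Fin.forall_fin_two]
    constructor
    · simp only [lt, Matrix.cons_val_zero]
      have h : l₀ + S - l₀ = S := by ring
      rw [h, habsS]
      nlinarith [mul_nonneg hBnn hs.le, mul_nonneg hAnn hs.le, mul_nonneg hCcnn hs.le,
        mul_nonneg (mul_nonneg hAnn (mul_self_nonneg Cc)) hs.le, sq_nonneg Cc]
    · simp only [lt, Matrix.cons_val_one, Matrix.head_cons, Matrix.cons_val_zero]
      have h : l₀ - S + c * (δ : ℂ) - l₀ = -S + c * (δ : ℂ) := by ring
      rw [h]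
      refine le_trans (norm_add_le _ _) ?_
      rw [norm_neg, habsS, norm_mul, habsδ, habsc]
      nlinarith [mul_le_mul_of_nonneg_left hds hCcnn, mul_nonneg hBnn hs.le,
        mul_nonneg hAnn hs.le, mul_nonneg hCcnn hs.le,
        mul_nonneg (mul_nonneg hAnn (mul_self_nonneg Cc)) hs.le, sq_nonneg Cc]
  · rw [Fin.forall_fin_two]
    have hC : A + B ≤ 3 * B + A * Cc ^ 2 + 1 + Cc + A + B := by nlinarith
    constructor
    · simp only [Mt, Matrix.cons_val_zero]
      refine le_trans (norm_add_le _ _) ?_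
      rw [norm_div, habsa, habsS, ← hB]
      have hB' : B ≤ B / s := by
        rw [le_div_iff₀ hs]
        exact mul_le_of_le_one_right hBnn hs1
      have h3 : A / s + B ≤ (A + B) / s := by
        rw [add_div]
        linarith
      refine h3.trans ?_
      exact div_le_div_of_nonneg_right' hC hs
    · simp only [Mt, Matrix.cons_val_one, Matrix.head_cons, Matrix.cons_val_zero]
      rw [norm_neg, norm_div, habsa, habsS]
      refine div_le_div_of_nonneg_right' ?_ hs
      have hACc : 0 ≤ A * Cc ^ 2 := by positivity
      linarith
end

section
/- Let λ₀ ∈ ℂ, m ≥ 1, and suppose complex numbers λ̃₀, …, λ̃_{m-1}, M̃₀, …, M̃_{m-1}, M₀, …, M_{m-1} satisfy: |∑_{j=0}^{m-1}(λ̃_j - λ₀)^s M̃_j - M_s| ≤ δ for s = 0,…,m-1; |∑_{j=0}^{m-1}(λ̃_j - λ₀)^s M̃_j| ≤ δ for s = m,…,2(m-1); |λ̃_j - λ₀| ≤ δ^{1/m} and |M̃_j| ≤ δ^{(1-m)/m} for all j. Let c₀ > 0 and suppose λ ∈ ℂ satisfies |λ - λ₀| ≥ c₀ and |λ - λ̃_j|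 ≥ c₀ for all j. Then |∑_{j=0}^{m-1} M̃_j/(λ - λ̃_j) - ∑_{s=0}^{m-1} M_s/(λ - λ₀)^{s+1}| ≤ C δ, where C depends only on m, c₀, and an upper bound on |λ - λ₀|. -/
open scoped Real

open Finset

/-- Finite geometric expansion of a simple pole. -/
lemma geom_pole (a b : ℂ) (ha : a ≠ 0) (hab : a - b ≠ 0) :
    ∀ n : ℕ, (1 : ℂ) / (a - b) =
      (∑ s ∈ Finset.range n, b ^ s / a ^ (s + 1)) + b ^ n / (a ^ n * (a - b))
  | 0 => by simp
  | (n + 1) => by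
    rw [geom_pole a b ha hab n, Finset.sum_range_succ]
    have h : b ^ n / (a ^ n * (a - b))
        = b ^ n / a ^ (n + 1) + b ^ (n + 1) / (a ^ (n + 1) * (a - b)) := by
      field_simp
      ring
    rw [h]; ring

/-- Estimate for the difference between a perturbed sum of simple poles and the
original higher-order pole expansion. -/
theorem perturbed_pole_estimate (m : ℕ) (hm : 1 ≤ m) (c₀ Λ : ℝ) (hc₀ : 0 < c₀)
    (hΛ : 0 < Λ) :
    ∃ C > 0, ∀ δ : ℝ, 0 < δ → δ ≤ 1 →
      ∀ (l₀ l : ℂ) (lt Mt M : Fin m → ℂ),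
        (∀ s : Fin m,
          Norm.norm ((∑ j, (lt j - l₀) ^ (s : ℕ) * Mt j) - M s) ≤ δ) →
        (∀ s : ℕ, m ≤ s → s ≤ 2 * (m - 1) →
          Norm.norm (∑ j, (lt j - l₀) ^ s * Mt j) ≤ δ) →
        (∀ j, Norm.norm (lt j - l₀) ≤ δ ^ ((1 : ℝ) / m)) →
        (∀ j, Norm.norm (Mt j) ≤ δ ^ ((1 - (m : ℝ)) / m)) →
        c₀ ≤ Norm.norm (l - l₀) → (∀ j, c₀ ≤ Norm.norm (l - lt j)) →
        Norm.norm (l - l₀) ≤ Λ →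
        Norm.norm ((∑ j, Mt j / (l - lt j)) -
            ∑ s : Fin m, M s / (l - l₀) ^ ((s : ℕ) + 1)) ≤ C * δ := by
  have hmR : (0 : ℝ) < m := by exact_mod_cast hm
  set K : ℝ := (max 1 c₀⁻¹) ^ (2 * m) with hKdef
  have hK1 : (1 : ℝ) ≤ K := one_le_pow₀ (le_max_left _ _)
  refine ⟨3 * m * K, mul_pos (mul_pos three_pos hmR) (lt_of_lt_of_le one_pos hK1), ?_⟩
  intro δ hδ hδ1 l₀ l lt Mt M h1 h2 h3 h4 hcl hclt _hΛ'
  have hKs : ∀ s : ℕ, s ≤ 2 * m → (1 : ℝ) / c₀ ^ s ≤ K := by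
    intro s hs
    rw [hKdef, one_div, ← inv_pow]
    calc c₀⁻¹ ^ s ≤ (max 1 c₀⁻¹) ^ s :=
          pow_le_pow_left₀ (inv_nonneg.2 hc₀.le) (le_max_right _ _) s
      _ ≤ (max 1 c₀⁻¹) ^ (2 * m) := pow_le_pow_right₀ (le_max_left _ _) hs
  have habs0 : (0 : ℝ) < Norm.norm (l - l₀) := lt_of_lt_of_le hc₀ hcl
  have hl₀ : l - l₀ ≠ 0 := by
    intro h; rw [h] at habs0; simp at habs0
  set n : ℕ := 2 * m - 1 with hn
  have hmn : m ≤ n := by omega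
  have hn1 : n + 1 = 2 * m := by omega
  -- generic bound
  have hbound : ∀ (x y : ℂ) (s : ℕ), s ≤ 2 * m → Norm.norm x ≤ δ →
      c₀ ^ s ≤ Norm.norm y → Norm.norm (x / y) ≤ δ * K := by
    intro x y s hs hx hy
    rw [norm_div]
    have hc : (0 : ℝ) < c₀ ^ s := pow_pos hc₀ s
    calc Norm.norm x / Norm.norm y ≤ δ / c₀ ^ s := div_le_div₀ hδ.le hx hc hy
      _ = δ * (1 / c₀ ^ s) := by ring
      _ ≤ δ * K := mul_le_mul_of_nonneg_left (hKs s hs) hδ.le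
  -- geometric expansion of each pole
  have hj : ∀ j, Mt j / (l - lt j)
      = (∑ s ∈ Finset.range n, (lt j - l₀) ^ s * Mt j / (l - l₀) ^ (s + 1))
        + (lt j - l₀) ^ n * Mt j / ((l - l₀) ^ n * (l - lt j)) := by
    intro j
    have habsj : (0 : ℝ) < Norm.norm (l - lt j) := lt_of_lt_of_le hc₀ (hclt j)
    have hnej : l - lt j ≠ 0 := by
      intro h; rw [h] at habsj; simp at habsj
    have hne : (l - l₀) - (lt j - l₀) ≠ 0 := by
      intro h
      exact hnej (by linear_combination h)
    have hg := geom_pole (l - l₀) (lt j - l₀) hl₀ hne n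
    calc Mt j / (l - lt j)
        = Mt j * ((1 : ℂ) / ((l - l₀) - (lt j - l₀))) := by
          rw [show (l - l₀) - (lt j - l₀) = l - lt j by ring]; ring
      _ = Mt j * ((∑ s ∈ Finset.range n, (lt j - l₀) ^ s / (l - l₀) ^ (s + 1))
            + (lt j - l₀) ^ n / ((l - l₀) ^ n * ((l - l₀) - (lt j - l₀)))) := by rw [hg]
      _ = _ := by
          rw [mul_add, Finset.mul_sum, show (l - l₀) - (lt j - l₀) = l - lt j by ring]
          congr 1
          · exact Finset.sum_congr rfl fun s _ => by ring
          · ring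
  have key : (∑ j, Mt j / (l - lt j))
      = (∑ s ∈ Finset.range n, (∑ j, (lt j - l₀) ^ s * Mt j) / (l - l₀) ^ (s + 1))
        + ∑ j, (lt j - l₀) ^ n * Mt j / ((l - l₀) ^ n * (l - lt j)) := by
    rw [Finset.sum_congr rfl (fun j _ => hj j), Finset.sum_add_distrib]
    congr 1
    rw [Finset.sum_comm]
    exact Finset.sum_congr rfl fun s _ => by rw [Finset.sum_div]
  have hsub : (∑ s : Fin m, (∑ j, (lt j - l₀) ^ (s : ℕ) * Mt j) / (l - l₀) ^ ((s : ℕ) + 1))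
      - (∑ s : Fin m, M s / (l - l₀) ^ ((s : ℕ) + 1))
      = ∑ s : Fin m, ((∑ j, (lt j - l₀) ^ (s : ℕ) * Mt j) - M s) / (l - l₀) ^ ((s : ℕ) + 1) := by
    rw [← Finset.sum_sub_distrib]
    exact Finset.sum_congr rfl fun s _ => (sub_div _ _ _).symm
  have E_eq : (∑ j, Mt j / (l - lt j)) - ∑ s : Fin m, M s / (l - l₀) ^ ((s : ℕ) + 1)
      = (∑ s : Fin m, ((∑ j, (lt j - l₀) ^ (s : ℕ) * Mt j) - M s) / (l - l₀) ^ ((s : ℕ) + 1))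
        + (∑ s ∈ Finset.Ico m n, (∑ j, (lt j - l₀) ^ s * Mt j) / (l - l₀) ^ (s + 1))
        + ∑ j, (lt j - l₀) ^ n * Mt j / ((l - l₀) ^ n * (l - lt j)) := by
    rw [key, ← Finset.sum_range_add_sum_Ico
        (fun s => (∑ j, (lt j - l₀) ^ s * Mt j) / (l - l₀) ^ (s + 1)) hmn,
      ← Fin.sum_univ_eq_sum_range
        (fun s => (∑ j, (lt j - l₀) ^ s * Mt j) / (l - l₀) ^ (s + 1)) m,
      ← hsub]
    ring
  -- bounds on the three pieces
  have b1 : ∀ s : Fin m,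
      Norm.norm (((∑ j, (lt j - l₀) ^ (s : ℕ) * Mt j) - M s) / (l - l₀) ^ ((s : ℕ) + 1))
        ≤ δ * K := by
    intro s
    refine hbound _ _ ((s : ℕ) + 1) (by have := s.2; omega) (h1 s) ?_
    rw [norm_pow]
    exact pow_le_pow_left₀ hc₀.le hcl _
  have b2 : ∀ s ∈ Finset.Ico m n,
      Norm.norm ((∑ j, (lt j - l₀) ^ s * Mt j) / (l - l₀) ^ (s + 1)) ≤ δ * K := by
    intro s hs
    rw [Finset.mem_Ico] at hs
    refine hbound _ _ (s + 1) (by omega) (h2 s hs.1 (by omega)) ?_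
    rw [norm_pow]
    exact pow_le_pow_left₀ hc₀.le hcl _
  have b3 : ∀ j : Fin m,
      Norm.norm ((lt j - l₀) ^ n * Mt j / ((l - l₀) ^ n * (l - lt j))) ≤ δ * K := by
    intro j
    refine hbound _ _ (n + 1) (by omega) ?_ ?_
    · rw [norm_mul, norm_pow]
      have hb : Norm.norm (lt j - l₀) ^ n ≤ (δ ^ ((1 : ℝ) / m)) ^ n :=
        pow_le_pow_left₀ (norm_nonneg _) (h3 j) n
      calc Norm.norm (lt j - l₀) ^ n * Norm.norm (Mt j)
          ≤ (δ ^ ((1 : ℝ) / m)) ^ n * δ ^ ((1 - (m : ℝ)) / m) :=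
            mul_le_mul hb (h4 j) (norm_nonneg _)
              (pow_nonneg (Real.rpow_nonneg hδ.le _) n)
        _ = δ := by
            rw [← Real.rpow_natCast (δ ^ ((1 : ℝ) / m)) n, ← Real.rpow_mul hδ.le,
              ← Real.rpow_add hδ]
            have hnR : (n : ℝ) = 2 * (m : ℝ) - 1 := by
              have h := hn1
              have : ((n : ℝ) + 1) = 2 * m := by exact_mod_cast congrArg Nat.cast h
              linarith
            rw [show (1 : ℝ) / m * n + (1 - (m : ℝ)) / m = 1 by
              rw [hnR]; field_simp; ring]
            exact Real.rpow_one δ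
    · rw [norm_mul, norm_pow, pow_succ]
      exact mul_le_mul (pow_le_pow_left₀ hc₀.le hcl n) (hclt j) hc₀.le
        (pow_nonneg (norm_nonneg _) n)
  -- assemble
  rw [E_eq]
  have hδK : (0 : ℝ) ≤ δ * K := mul_nonneg hδ.le (le_trans zero_le_one hK1)
  have hT1 : Norm.norm (∑ s : Fin m,
      ((∑ j, (lt j - l₀) ^ (s : ℕ) * Mt j) - M s) / (l - l₀) ^ ((s : ℕ) + 1))
      ≤ m * (δ * K) := by
    refine (norm_sum_le _ _).trans ?_
    have := Finset.sum_le_card_nsmul Finset.univ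
      (fun s : Fin m => Norm.norm (((∑ j, (lt j - l₀) ^ (s : ℕ) * Mt j) - M s)
        / (l - l₀) ^ ((s : ℕ) + 1))) (δ * K) (fun s _ => b1 s)
    simpa [Finset.card_univ, nsmul_eq_mul] using this
  have hT2 : Norm.norm (∑ s ∈ Finset.Ico m n,
      (∑ j, (lt j - l₀) ^ s * Mt j) / (l - l₀) ^ (s + 1)) ≤ m * (δ * K) := by
    refine (norm_sum_le _ _).trans ?_
    have hcard := Finset.sum_le_card_nsmul (Finset.Ico m n)
      (fun s => Norm.norm ((∑ j, (lt j - l₀) ^ s * Mt j) / (l - l₀) ^ (s + 1)))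
      (δ * K) b2
    have hc' : ((Finset.Ico m n).card : ℝ) ≤ m := by
      rw [Nat.card_Ico]
      exact_mod_cast Nat.cast_le.2 (by omega : n - m ≤ m)
    calc _ ≤ ((Finset.Ico m n).card : ℝ) * (δ * K) := by
          simpa [nsmul_eq_mul] using hcard
      _ ≤ m * (δ * K) := mul_le_mul_of_nonneg_right hc' hδK
  have hT3 : Norm.norm (∑ j, (lt j - l₀) ^ n * Mt j / ((l - l₀) ^ n * (l - lt j)))
      ≤ m * (δ * K) := by
    refine (norm_sum_le _ _).trans ?_
    have := Finset.sum_le_card_nsmul Finset.univ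
      (fun j : Fin m => Norm.norm ((lt j - l₀) ^ n * Mt j
        / ((l - l₀) ^ n * (l - lt j)))) (δ * K) (fun j _ => b3 j)
    simpa [Finset.card_univ, nsmul_eq_mul] using this
  calc Norm.norm (_ + _ + _)
      ≤ Norm.norm (_ + _) + Norm.norm _ := norm_add_le _ _
    _ ≤ Norm.norm _ + Norm.norm _ + Norm.norm _ :=
        add_le_add_left (norm_add_le _ _) _
    _ ≤ m * (δ * K) + m * (δ * K) + m * (δ * K) := by
        exact add_le_add (add_le_add hT1 hT2) hT3
    _ = 3 * m * K * δ := by ring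
end

section
/- Let φ(x, λ) solve -y'' + q y = λ y with φ(0,λ)=1, φ'(0,λ)=h, where q is continuous on [0,π] and h ∈ ℂ. For fixed x ∈ [0,π], the map λ ↦ φ(x, λ) is entire, and for λ_n = ρ_n² and λ̃_n = ρ̃_n² with ρ_n, ρ̃_n in a fixed horizontal strip {|Im ρ| ≤ A} and Re ρ ≥ 0, one has |φ(x, λ_n) - φ(x, λ̃_n)| ≤ C |ρ_n - ρ̃_n|, with C depending only on q, h, A. -/
open Complex Set intervalIntegral Function Metric

noncomputable def Complex.abs : AbsoluteValue ℂ ℝ := NormedField.toAbsoluteValue ℂ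

lemma Complex.norm_eq_abs (z : ℂ) : ‖z‖ = Complex.abs z := rfl

lemma Complex.abs_ofReal (r : ℝ) : Complex.abs (r : ℂ) = |r| := Complex.norm_real r

lemma Complex.abs_I : Complex.abs I = 1 := Complex.norm_I

lemma Complex.abs_ofNat (n : ℕ) [n.AtLeastTwo] :
    Complex.abs (ofNat(n) : ℂ) = ofNat(n) := Complex.norm_ofNat n

lemma Complex.continuous_abs : Continuous Complex.abs := continuous_norm

lemma Complex.abs_exp (z : ℂ) : Complex.abs (Complex.exp z) = Real.exp z.re := Complex.norm_exp z

lemma Complex.abs_im_le_abs (z : ℂ) : |z.im| ≤ Complex.abs z := Complex.abs_im_le_norm z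

lemma cos_abs_le (z : ℂ) : Complex.abs (Complex.cos z) ≤ Real.exp |z.im| := by
  have hz : Complex.cos z = (Complex.exp (z*I) + Complex.exp (-(z*I)))/2 := by
    rw [Complex.cos]; ring_nf
  rw [hz]
  have h1 : Complex.abs (Complex.exp (z*I)) = Real.exp (-(z.im)) := by
    rw [Complex.abs_exp]; simp
  have h2 : Complex.abs (Complex.exp (-(z*I))) = Real.exp (z.im) := by
    rw [Complex.abs_exp]; simp
  have e1 := Real.exp_le_exp.2 (neg_le_abs z.im)
  have e2 := Real.exp_le_exp.2 (le_abs_self z.im)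
  calc Complex.abs ((Complex.exp (z*I) + Complex.exp (-(z*I)))/2)
      ≤ (Real.exp (-(z.im)) + Real.exp z.im)/2 := by
        rw [map_div₀]; simp only [Complex.abs_ofNat]
        gcongr; exact (Complex.abs.add_le _ _).trans (by rw [h1,h2])
    _ ≤ Real.exp |z.im| := by linarith

lemma sin_abs_le (z : ℂ) : Complex.abs (Complex.sin z) ≤ Real.exp |z.im| := by
  have hz : Complex.sin z = (Complex.exp (-(z*I)) - Complex.exp (z*I)) * I / 2 := by
    rw [Complex.sin]; ring_nf
  rw [hz]
  have h1 : Complex.abs (Complex.exp (z*I)) = Real.exp (-(z.im)) := by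
    rw [Complex.abs_exp]; simp
  have h2 : Complex.abs (Complex.exp (-(z*I))) = Real.exp (z.im) := by
    rw [Complex.abs_exp]; simp
  have e1 := Real.exp_le_exp.2 (neg_le_abs z.im)
  have e2 := Real.exp_le_exp.2 (le_abs_self z.im)
  calc Complex.abs ((Complex.exp (-(z*I)) - Complex.exp (z*I)) * I / 2)
      ≤ (Real.exp (z.im) + Real.exp (-(z.im)))/2 := by
        rw [map_div₀, map_mul]; simp only [Complex.abs_ofNat, Complex.abs_I, mul_one]
        gcongr; exact (Complex.abs.sub_le_add _ _).trans (by rw [h1,h2]) -- maybe wrong name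
    _ ≤ Real.exp |z.im| := by linarith

-- sin z = ∫_0^1 z cos (z u) du, giving |sin z| ≤ |z| e^{|Im z|}
lemma sin_abs_le' (z : ℂ) : Complex.abs (Complex.sin z) ≤ Complex.abs z * Real.exp |z.im| := by
  have key : Complex.sin z = ∫ u in (0:ℝ)..1, z * Complex.cos (z * u) := by
    have : ∀ u : ℝ, HasDerivAt (fun u : ℝ => Complex.sin (z * u)) (z * Complex.cos (z * u)) u := by
      intro u
      have h1 : HasDerivAt (fun u : ℝ => z * (u:ℂ)) z u := by
        simpa using (Complex.ofRealCLM.hasDerivAt (x := u)).const_mul z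
      have h2 := (Complex.hasDerivAt_sin (z * u)).scomp u h1
      exact h2.congr_deriv (smul_eq_mul _ _)
    have hInt : IntervalIntegrable (fun u : ℝ => z * Complex.cos (z * u)) MeasureTheory.volume 0 1 :=
      (Continuous.intervalIntegrable (by continuity) 0 1)
    have := intervalIntegral.integral_eq_sub_of_hasDerivAt (fun u _ => this u) hInt
    rw [this]; simp
  rw [key]
  have := intervalIntegral.norm_integral_le_of_norm_le_const
    (C := Complex.abs z * Real.exp |z.im|)
    (f := fun u : ℝ => z * Complex.cos (z * u)) (a := 0) (b := 1) ?_
  · simpa [Complex.norm_eq_abs] using this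
  · intro u hu
    rw [Set.uIoc_of_le (by norm_num)] at hu
    have : Complex.abs (Complex.cos (z*u)) ≤ Real.exp |z.im| := by
      refine (cos_abs_le _).trans ?_
      apply Real.exp_le_exp.2
      have : (z * (u:ℂ)).im = z.im * u := by simp
      rw [this, abs_mul, _root_.abs_of_nonneg hu.1.le]
      nlinarith [_root_.abs_nonneg z.im, hu.1.le, hu.2]
    calc ‖z * Complex.cos (z*u)‖ = Complex.abs z * Complex.abs (Complex.cos (z*u)) := by
          simp [Complex.norm_eq_abs]
      _ ≤ Complex.abs z * Real.exp |z.im| := by gcongr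

noncomputable def Kk (ρ s : ℂ) : ℂ := if ρ = 0 then s else Complex.sin (ρ * s) / ρ

lemma Kk_zero_right (ρ : ℂ) : Kk ρ 0 = 0 := by
  unfold Kk; split <;> simp

lemma Kk_bound1 (ρ : ℂ) {s : ℝ} (hs : 0 ≤ s) :
    Complex.abs (Kk ρ s) ≤ s * Real.exp (|ρ.im| * s) := by
  unfold Kk; split
  · rw [Complex.abs_ofReal, _root_.abs_of_nonneg hs]
    exact le_mul_of_one_le_right hs (Real.one_le_exp (by positivity))
  · rename_i hρ
    rw [map_div₀]
    rw [div_le_iff₀ (by simpa using hρ)]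
    have h1 := sin_abs_le' (ρ * s)
    have h2 : (ρ * (s:ℂ)).im = ρ.im * s := by simp
    have h3 : Complex.abs (ρ * s) = Complex.abs ρ * s := by
      rw [map_mul]; simp [Complex.abs_ofReal, _root_.abs_of_nonneg hs]
    rw [h2, h3] at h1
    calc Complex.abs (Complex.sin (ρ * s)) ≤ Complex.abs ρ * s * Real.exp |ρ.im * s| := h1
      _ = s * Real.exp (|ρ.im| * s) * Complex.abs ρ := by
          rw [abs_mul, _root_.abs_of_nonneg hs]; ring

lemma Kk_bound2 {ρ : ℂ} (hρ : ρ ≠ 0) {s : ℝ} (hs : 0 ≤ s) :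
    Complex.abs (Kk ρ s) * Complex.abs ρ ≤ Real.exp (|ρ.im| * s) := by
  unfold Kk; rw [if_neg hρ, map_div₀, div_mul_cancel₀]
  · have h1 := sin_abs_le (ρ * s)
    have h2 : (ρ * (s:ℂ)).im = ρ.im * s := by simp
    rw [h2, abs_mul, _root_.abs_of_nonneg hs] at h1
    exact h1
  · simpa using hρ

-- derivative facts (in the real variable t, with x fixed)
lemma hasDerivAt_Kk (ρ : ℂ) (x : ℝ) (t : ℝ) :
    HasDerivAt (fun t : ℝ => Kk ρ ((x:ℂ) - t)) (-Complex.cos (ρ * ((x:ℂ) - t))) t := by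
  have hc : HasDerivAt (fun t : ℝ => (x:ℂ) - t) (-1) t := by
    simpa using ((Complex.ofRealCLM.hasDerivAt (x := t)).const_sub (x:ℂ))
  unfold Kk; split
  · rename_i hρ; subst hρ
    simpa using hc
  · rename_i hρ
    have h1 : HasDerivAt (fun t : ℝ => ρ * ((x:ℂ) - t)) (ρ * (-1)) t := hc.const_mul ρ
    have h2 := (Complex.hasDerivAt_sin (ρ * ((x:ℂ) - t))).scomp t h1
    have h3 := h2.div_const ρ
    refine h3.congr_deriv ?_
    rw [smul_eq_mul]
    field_simp

lemma hasDerivAt_cos_k (ρ : ℂ) (x : ℝ) (t : ℝ) :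
    HasDerivAt (fun t : ℝ => Complex.cos (ρ * ((x:ℂ) - t))) (ρ^2 * Kk ρ ((x:ℂ) - t)) t := by
  have hc : HasDerivAt (fun t : ℝ => (x:ℂ) - t) (-1) t := by
    simpa using ((Complex.ofRealCLM.hasDerivAt (x := t)).const_sub (x:ℂ))
  have h1 : HasDerivAt (fun t : ℝ => ρ * ((x:ℂ) - t)) (ρ * (-1)) t := hc.const_mul ρ
  have h2 := (Complex.hasDerivAt_cos (ρ * ((x:ℂ) - t))).scomp t h1
  unfold Kk; split
  · rename_i hρ; subst hρ
    have : (fun t : ℝ => Complex.cos (0 * ((x:ℂ) - t))) = fun _ => 1 := by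
      funext t; simp
    rw [this]
    simpa using hasDerivAt_const t (1:ℂ)
  · refine h2.congr_deriv ?_
    rename_i hρ
    rw [smul_eq_mul]
    field_simp

lemma continuous_Kk (ρ : ℂ) (x : ℝ) : Continuous (fun t : ℝ => Kk ρ ((x:ℂ) - t)) := by
  unfold Kk; split
  · continuity
  · continuity

lemma rep {x : ℝ} (hx0 : 0 ≤ x) (ρ : ℂ) (f f' F : ℝ → ℂ)
    (hF : ContinuousOn F (Icc 0 x))
    (hf : ∀ t, HasDerivAt f (f' t) t)
    (hf' : ∀ t ∈ Icc 0 x, HasDerivAt f' (-ρ^2 * f t + F t) t) :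
    f x = Complex.cos (ρ * x) * f 0 + Kk ρ x * f' 0
      + ∫ t in (0:ℝ)..x, Kk ρ ((x:ℂ) - t) * F t := by
  set g : ℝ → ℂ := fun t => Kk ρ ((x:ℂ) - t) * f' t + Complex.cos (ρ * ((x:ℂ) - t)) * f t with hg
  have hderiv : ∀ t ∈ uIcc (0:ℝ) x, HasDerivAt g (Kk ρ ((x:ℂ) - t) * F t) t := by
    intro t ht
    rw [uIcc_of_le hx0] at ht
    have h1 := ((hasDerivAt_Kk ρ x t).mul (hf' t ht)).add
      ((hasDerivAt_cos_k ρ x t).mul (hf t))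
    refine h1.congr_deriv ?_
    ring
  have hInt : IntervalIntegrable (fun t => Kk ρ ((x:ℂ) - t) * F t) MeasureTheory.volume 0 x := by
    apply ContinuousOn.intervalIntegrable
    rw [uIcc_of_le hx0]
    exact ((continuous_Kk ρ x).continuousOn).mul hF
  have := intervalIntegral.integral_eq_sub_of_hasDerivAt hderiv hInt
  have hgx : g x = f x := by
    simp only [hg]
    rw [show (x:ℂ) - (x:ℝ) = 0 by push_cast; ring]
    simp [Kk_zero_right]
  have hg0 : g 0 = Kk ρ x * f' 0 + Complex.cos (ρ * x) * f 0 := by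
    simp [hg]
  rw [hgx, hg0] at this
  rw [this]
  ring

lemma gron {u : ℝ → ℝ} {b M Kc : ℝ} (hb : 0 ≤ b) (hu : Continuous u)
    (hpos : ∀ x, 0 ≤ u x) (hM : 0 ≤ M) (hK : 0 ≤ Kc)
    (hineq : ∀ x ∈ Icc 0 b, u x ≤ M + Kc * ∫ t in (0:ℝ)..x, u t) :
    ∀ x ∈ Icc 0 b, u x ≤ M * Real.exp (Kc * b) := by
  set U : ℝ → ℝ := fun x => ∫ t in (0:ℝ)..x, u t with hU
  have hUc : Continuous U :=
    intervalIntegral.continuous_primitive (fun a b => hu.intervalIntegrable a b) 0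
  have hUpos : ∀ x ∈ Icc 0 b, 0 ≤ U x := fun x hx =>
    intervalIntegral.integral_nonneg hx.1 (fun t _ => hpos t)
  have hderiv : ∀ x ∈ Ico 0 b, HasDerivWithinAt U (u x) (Ici x) x := by
    intro x hx
    exact intervalIntegral.integral_hasDerivWithinAt_right (hu.intervalIntegrable 0 x)
      hu.stronglyMeasurable.stronglyMeasurableAtFilter hu.continuousWithinAt
  have key := norm_le_gronwallBound_of_norm_deriv_right_le (f := U) (f' := u)
    (δ := 0) (K := Kc) (ε := M) (a := 0) (b := b) hUc.continuousOn hderiv (by simp [hU]) ?_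
  · intro x hx
    have h1 : u x ≤ M + Kc * U x := hineq x hx
    have h2 : ‖U x‖ ≤ gronwallBound 0 Kc M (x - 0) := key x hx
    rw [Real.norm_eq_abs, _root_.abs_of_nonneg (hUpos x hx)] at h2
    rcases eq_or_ne Kc 0 with hKc | hKc
    · subst hKc
      simpa using h1.trans (by nlinarith [Real.one_le_exp (mul_nonneg hK hb), hpos x])
    · rw [gronwallBound_of_K_ne_0 hKc] at h2
      simp only [zero_mul, zero_add, sub_zero] at h2
      have h3 : M + Kc * U x ≤ M * Real.exp (Kc * x) := by
        have := mul_le_mul_of_nonneg_left h2 hK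
        have hKc' : Kc * (M / Kc * (Real.exp (Kc * x) - 1)) = M * (Real.exp (Kc * x) - 1) := by
          field_simp
        nlinarith [this]
      refine h1.trans (h3.trans ?_)
      have : Real.exp (Kc * x) ≤ Real.exp (Kc * b) := Real.exp_le_exp.2 (by nlinarith [hx.2])
      nlinarith
  · intro x hx
    have h1 : u x ≤ M + Kc * U x := hineq x (Ico_subset_Icc_self hx)
    rw [Real.norm_eq_abs, _root_.abs_of_nonneg (hpos x), Real.norm_eq_abs,
      _root_.abs_of_nonneg (hUpos x (Ico_subset_Icc_self hx))]
    linarith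

lemma Kk_unif {ρ : ℂ} {A s : ℝ} (him : |ρ.im| ≤ A) (hs : 0 ≤ s) (hsπ : s ≤ Real.pi) :
    Complex.abs (Kk ρ s) ≤ Real.pi * Real.exp (A * Real.pi) := by
  refine (Kk_bound1 ρ hs).trans ?_
  have hA0 : 0 ≤ A := le_trans (abs_nonneg _) him
  have : |ρ.im| * s ≤ A * Real.pi := by nlinarith
  have := Real.exp_le_exp.2 this
  nlinarith [Real.exp_pos (|ρ.im| * s)]

lemma cos_unif {ρ : ℂ} {A x : ℝ} (him : |ρ.im| ≤ A) (hx : 0 ≤ x) (hxπ : x ≤ Real.pi) :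
    Complex.abs (Complex.cos (ρ * x)) ≤ Real.exp (A * Real.pi) := by
  refine (cos_abs_le _).trans (Real.exp_le_exp.2 ?_)
  have : (ρ * (x:ℂ)).im = ρ.im * x := by simp
  rw [this, abs_mul, _root_.abs_of_nonneg hx]
  nlinarith [abs_nonneg ρ.im]

lemma apriori {q : ℝ → ℂ} {h : ℂ} {φ φ' : ℂ → ℝ → ℂ}
    (hq : ContinuousOn q (Set.Icc 0 Real.pi))
    (hinit : ∀ l : ℂ, φ l 0 = 1 ∧ φ' l 0 = h)
    (hode1 : ∀ l : ℂ, ∀ x : ℝ, HasDerivAt (φ l) (φ' l x) x)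
    (hode2 : ∀ l : ℂ, ∀ x : ℝ, HasDerivAt (φ' l) ((q x - l) * φ l x) x)
    {Q : ℝ} (hQ : ∀ t ∈ Icc 0 Real.pi, Complex.abs (q t) ≤ Q)
    {ρ : ℂ} {A : ℝ} (hA : |ρ.im| ≤ A) :
    ∀ x ∈ Icc 0 Real.pi, Complex.abs (φ (ρ^2) x) ≤
      (1 + Complex.abs h * Real.pi) * Real.exp (A * Real.pi) *
        Real.exp ((Q * Real.pi * Real.exp (A * Real.pi)) * Real.pi) := by
  have hA0 : 0 ≤ A := le_trans (abs_nonneg _) hA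
  have hQ0 : 0 ≤ Q := le_trans (Complex.abs.nonneg _) (hQ 0 (by constructor <;> positivity))
  set l : ℂ := ρ^2 with hl
  have hφc : Continuous (φ l) := by
    apply continuous_iff_continuousAt.2
    exact fun x => (hode1 l x).differentiableAt.continuousAt
  have hrep : ∀ x ∈ Icc 0 Real.pi, φ l x = Complex.cos (ρ * x) * 1 + Kk ρ x * h
      + ∫ t in (0:ℝ)..x, Kk ρ ((x:ℂ) - t) * (q t * φ l t) := by
    intro x hx
    have := rep hx.1 ρ (φ l) (φ' l) (fun t => q t * φ l t)
      ((hq.mono (Icc_subset_Icc le_rfl hx.2)).mul hφc.continuousOn)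
      (hode1 l)
      (fun t ht => by
        have := hode2 l t
        convert this using 1
        rw [hl]; ring)
    rw [(hinit l).1, (hinit l).2] at this
    exact this
  set M : ℝ := (1 + Complex.abs h * Real.pi) * Real.exp (A * Real.pi) with hM
  set Kc : ℝ := Q * Real.pi * Real.exp (A * Real.pi) with hKc
  have hM0 : 0 ≤ M := by positivity
  have hKc0 : 0 ≤ Kc := by positivity
  refine gron Real.pi_pos.le (Complex.continuous_abs.comp hφc) (fun x => Complex.abs.nonneg _)
    hM0 hKc0 ?_
  intro x hx
  rw [hrep x hx]
  have hb1 : Complex.abs (Complex.cos (ρ * x) * 1) ≤ Real.exp (A * Real.pi) := by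
    rw [mul_one]; exact cos_unif hA hx.1 hx.2
  have hb2 : Complex.abs (Kk ρ x * h) ≤ Real.pi * Real.exp (A * Real.pi) * Complex.abs h := by
    rw [map_mul]
    exact mul_le_mul_of_nonneg_right (Kk_unif hA hx.1 hx.2) (Complex.abs.nonneg h)
  have hb3 : Complex.abs (∫ t in (0:ℝ)..x, Kk ρ ((x:ℂ) - t) * (q t * φ l t))
      ≤ Kc * ∫ t in (0:ℝ)..x, Complex.abs (φ l t) := by
    rw [← intervalIntegral.integral_const_mul]
    rw [← Complex.norm_eq_abs]
    refine (intervalIntegral.norm_integral_le_integral_norm hx.1).trans ?_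
    apply intervalIntegral.integral_mono_on hx.1
    · apply ContinuousOn.intervalIntegrable
      rw [uIcc_of_le hx.1]
      apply ContinuousOn.norm
      exact ((continuous_Kk ρ x).continuousOn).mul
        (((hq.mono (Icc_subset_Icc le_rfl hx.2)).mul hφc.continuousOn))
    · apply ContinuousOn.intervalIntegrable
      rw [uIcc_of_le hx.1]
      exact (continuousOn_const.mul (Complex.continuous_abs.comp hφc).continuousOn)
    · intro t ht
      have ht' : t ∈ Icc 0 Real.pi := ⟨ht.1, ht.2.trans hx.2⟩
      rw [Complex.norm_eq_abs, map_mul, map_mul, hKc]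
      have k1 : Complex.abs (Kk ρ ((x:ℂ) - t)) ≤ Real.pi * Real.exp (A * Real.pi) := by
        have : ((x:ℂ) - (t:ℂ)) = ((x - t : ℝ) : ℂ) := by push_cast; ring
        rw [this]
        exact Kk_unif hA (by linarith [ht.2]) (by linarith [ht.1, hx.2])
      calc Complex.abs (Kk ρ ((x:ℂ) - t)) * (Complex.abs (q t) * Complex.abs (φ l t))
          ≤ (Real.pi * Real.exp (A * Real.pi)) * (Q * Complex.abs (φ l t)) := by
            apply mul_le_mul k1 (mul_le_mul_of_nonneg_right (hQ t ht') (Complex.abs.nonneg _))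
              (by positivity) (by positivity)
        _ = Q * Real.pi * Real.exp (A * Real.pi) * Complex.abs (φ l t) := by ring
  calc Complex.abs (Complex.cos (ρ * x) * 1 + Kk ρ x * h
        + ∫ t in (0:ℝ)..x, Kk ρ ((x:ℂ) - t) * (q t * φ l t))
      ≤ Complex.abs (Complex.cos (ρ * x) * 1) + Complex.abs (Kk ρ x * h)
        + Complex.abs (∫ t in (0:ℝ)..x, Kk ρ ((x:ℂ) - t) * (q t * φ l t)) := by
        refine (Complex.abs.add_le _ _).trans ?_
        gcongr
        exact Complex.abs.add_le _ _
    _ ≤ M + Kc * ∫ t in (0:ℝ)..x, Complex.abs (φ l t) := by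
        rw [hM]
        have := hb3
        nlinarith [Complex.abs.nonneg h]
  

lemma lip_half {q : ℝ → ℂ} {h : ℂ} {φ φ' : ℂ → ℝ → ℂ}
    (hq : ContinuousOn q (Set.Icc 0 Real.pi))
    (hinit : ∀ l : ℂ, φ l 0 = 1 ∧ φ' l 0 = h)
    (hode1 : ∀ l : ℂ, ∀ x : ℝ, HasDerivAt (φ l) (φ' l x) x)
    (hode2 : ∀ l : ℂ, ∀ x : ℝ, HasDerivAt (φ' l) ((q x - l) * φ l x) x)
    {Q : ℝ} (hQ : ∀ t ∈ Icc 0 Real.pi, Complex.abs (q t) ≤ Q)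
    {A : ℝ} {ρ ρt : ℂ} (hA1 : |ρ.im| ≤ A) (hA2 : |ρt.im| ≤ A)
    (hle : Complex.abs ρt ≤ Complex.abs ρ) :
    ∀ x ∈ Icc 0 Real.pi, Complex.abs (φ (ρ^2) x - φ (ρt^2) x) ≤
      (2 * Real.exp (A * Real.pi) *
        ((1 + Complex.abs h * Real.pi) * Real.exp (A * Real.pi) *
          Real.exp ((Q * Real.pi * Real.exp (A * Real.pi)) * Real.pi)) * Real.pi) *
        Real.exp ((Q * Real.pi * Real.exp (A * Real.pi)) * Real.pi) *
        Complex.abs (ρ - ρt) := by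
  have hA0 : 0 ≤ A := le_trans (abs_nonneg _) hA1
  have hQ0 : 0 ≤ Q := le_trans (Complex.abs.nonneg _) (hQ 0 (by constructor <;> positivity))
  set C0 : ℝ := (1 + Complex.abs h * Real.pi) * Real.exp (A * Real.pi) *
      Real.exp ((Q * Real.pi * Real.exp (A * Real.pi)) * Real.pi) with hC0
  set Kc : ℝ := Q * Real.pi * Real.exp (A * Real.pi) with hKc
  have hC00 : 0 ≤ C0 := by positivity
  have hKc0 : 0 ≤ Kc := by positivity
  rcases eq_or_ne ρ 0 with hρ0 | hρ0
  · subst hρ0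
    have : ρt = 0 := by
      have := Complex.abs.nonneg ρt
      have h0 : Complex.abs ρt = 0 := le_antisymm (by simpa using hle) (Complex.abs.nonneg _)
      exact Complex.abs.eq_zero.1 h0
    subst this
    intro x hx
    simp only [sub_self, map_zero]
    positivity
  · intro x hx
    set w : ℝ → ℂ := fun t => φ (ρ^2) t - φ (ρt^2) t with hw
    set w' : ℝ → ℂ := fun t => φ' (ρ^2) t - φ' (ρt^2) t with hw'
    have hwc : Continuous w := by
      apply continuous_iff_continuousAt.2
      exact fun t => ((hode1 _ t).sub (hode1 _ t)).differentiableAt.continuousAt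
    have hφtc : Continuous (φ (ρt^2)) := by
      apply continuous_iff_continuousAt.2
      exact fun t => (hode1 _ t).differentiableAt.continuousAt
    set F : ℝ → ℂ := fun t => q t * w t + (ρt^2 - ρ^2) * φ (ρt^2) t with hF
    have hrep : ∀ y ∈ Icc 0 Real.pi, w y = ∫ t in (0:ℝ)..y, Kk ρ ((y:ℂ) - t) * F t := by
      intro y hy
      have hFc : ContinuousOn F (Icc 0 y) := by
        apply ContinuousOn.add
        · exact (hq.mono (Icc_subset_Icc le_rfl hy.2)).mul hwc.continuousOn
        · exact continuousOn_const.mul hφtc.continuousOn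
      have := rep hy.1 ρ w w' F hFc
        (fun t => (hode1 _ t).sub (hode1 _ t))
        (fun t ht => by
          have := (hode2 (ρ^2) t).sub (hode2 (ρt^2) t)
          refine this.congr_deriv ?_
          simp only [hw, hF]
          ring)
      have hw0 : w 0 = 0 := by simp [hw, (hinit (ρ^2)).1, (hinit (ρt^2)).1]
      have hw'0 : w' 0 = 0 := by simp [hw', (hinit (ρ^2)).2, (hinit (ρt^2)).2]
      rw [hw0, hw'0] at this
      simpa using this
    -- a priori bound for φ (ρt^2)
    have hap := apriori hq hinit hode1 hode2 hQ hA2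
    -- Gronwall setup
    have key : ∀ y ∈ Icc 0 Real.pi, Complex.abs (w y) ≤
        (2 * Real.exp (A * Real.pi) * C0 * Real.pi * Complex.abs (ρ - ρt))
          * Real.exp (Kc * Real.pi) := by
      apply gron Real.pi_pos.le (Complex.continuous_abs.comp hwc)
        (fun _ => Complex.abs.nonneg _) (by positivity) hKc0
      intro y hy
      rw [show (Complex.abs ∘ w) y = Complex.abs (w y) from rfl, hrep y hy]
      set c2 : ℝ := 2 * Real.exp (A * Real.pi) * C0 * Complex.abs (ρ - ρt) with hc2
      have hc20 : 0 ≤ c2 := by positivity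
      have hbnd : ∀ t ∈ Icc 0 y, ‖Kk ρ ((y:ℂ) - t) * F t‖ ≤ Kc * Complex.abs (w t) + c2 := by
        intro t ht
        have ht' : t ∈ Icc 0 Real.pi := ⟨ht.1, ht.2.trans hy.2⟩
        have hcast : ((y:ℂ) - (t:ℂ)) = ((y - t : ℝ) : ℂ) := by push_cast; ring
        have hst0 : (0:ℝ) ≤ y - t := by linarith [ht.2]
        have hstπ : y - t ≤ Real.pi := by linarith [ht.1, hy.2]
        have k1 : Complex.abs (Kk ρ ((y:ℂ) - t)) ≤ Real.pi * Real.exp (A * Real.pi) := by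
          rw [hcast]; exact Kk_unif hA1 hst0 hstπ
        have k2 : Complex.abs (Kk ρ ((y:ℂ) - t)) * Complex.abs ρ ≤ Real.exp (A * Real.pi) := by
          rw [hcast]
          refine (Kk_bound2 hρ0 hst0).trans (Real.exp_le_exp.2 ?_)
          nlinarith [abs_nonneg ρ.im]
        rw [Complex.norm_eq_abs, map_mul]
        calc Complex.abs (Kk ρ ((y:ℂ) - t)) * Complex.abs (F t)
            ≤ Complex.abs (Kk ρ ((y:ℂ) - t)) * (Complex.abs (q t * w t))
              + Complex.abs (Kk ρ ((y:ℂ) - t)) * Complex.abs ((ρt^2 - ρ^2) * φ (ρt^2) t) := by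
              rw [← mul_add]
              exact mul_le_mul_of_nonneg_left (Complex.abs.add_le _ _) (Complex.abs.nonneg _)
          _ ≤ Kc * Complex.abs (w t) + c2 := by
              apply add_le_add
              · rw [map_mul, hKc]
                calc Complex.abs (Kk ρ ((y:ℂ) - t)) * (Complex.abs (q t) * Complex.abs (w t))
                    ≤ (Real.pi * Real.exp (A * Real.pi)) * (Q * Complex.abs (w t)) := by
                      apply mul_le_mul k1 (mul_le_mul_of_nonneg_right (hQ t ht')
                        (Complex.abs.nonneg _)) (by positivity) (by positivity)
                  _ = Q * Real.pi * Real.exp (A * Real.pi) * Complex.abs (w t) := by ring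
              · rw [map_mul, hc2]
                have hsum : Complex.abs (ρt^2 - ρ^2) ≤ 2 * Complex.abs ρ * Complex.abs (ρ - ρt) := by
                  have : ρt^2 - ρ^2 = -((ρ - ρt) * (ρ + ρt)) := by ring
                  rw [this, AbsoluteValue.map_neg, map_mul]
                  rw [mul_comm (2 * Complex.abs ρ) _]
                  apply mul_le_mul_of_nonneg_left _ (Complex.abs.nonneg _)
                  calc Complex.abs (ρ + ρt) ≤ Complex.abs ρ + Complex.abs ρt :=
                        Complex.abs.add_le _ _
                    _ ≤ 2 * Complex.abs ρ := by linarith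
                have hφb : Complex.abs (φ (ρt^2) t) ≤ C0 := hap t ht'
                calc Complex.abs (Kk ρ ((y:ℂ) - t)) * (Complex.abs (ρt^2 - ρ^2)
                      * Complex.abs (φ (ρt^2) t))
                    ≤ Complex.abs (Kk ρ ((y:ℂ) - t)) * ((2 * Complex.abs ρ
                      * Complex.abs (ρ - ρt)) * C0) := by
                      apply mul_le_mul_of_nonneg_left _ (Complex.abs.nonneg _)
                      exact mul_le_mul hsum hφb (Complex.abs.nonneg _) (by positivity)
                  _ = (Complex.abs (Kk ρ ((y:ℂ) - t)) * Complex.abs ρ)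
                      * (2 * Complex.abs (ρ - ρt) * C0) := by ring
                  _ ≤ Real.exp (A * Real.pi) * (2 * Complex.abs (ρ - ρt) * C0) := by
                      apply mul_le_mul_of_nonneg_right k2 (by positivity)
                  _ = 2 * Real.exp (A * Real.pi) * C0 * Complex.abs (ρ - ρt) := by ring
      -- integrate the bound
      have hFc : ContinuousOn F (Icc 0 y) := by
        apply ContinuousOn.add
        · exact (hq.mono (Icc_subset_Icc le_rfl hy.2)).mul hwc.continuousOn
        · exact continuousOn_const.mul hφtc.continuousOn
      have hint1 : IntervalIntegrable (fun t => ‖Kk ρ ((y:ℂ) - t) * F t‖)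
          MeasureTheory.volume 0 y := by
        apply ContinuousOn.intervalIntegrable
        rw [uIcc_of_le hy.1]
        exact (((continuous_Kk ρ y).continuousOn).mul hFc).norm
      have hint2 : IntervalIntegrable (fun t => Kc * Complex.abs (w t) + c2)
          MeasureTheory.volume 0 y :=
        ((continuous_const.mul (Complex.continuous_abs.comp hwc)).add continuous_const).intervalIntegrable 0 y
      calc Complex.abs (∫ t in (0:ℝ)..y, Kk ρ ((y:ℂ) - t) * F t)
          ≤ ∫ t in (0:ℝ)..y, ‖Kk ρ ((y:ℂ) - t) * F t‖ := by
            rw [← Complex.norm_eq_abs]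
            exact intervalIntegral.norm_integral_le_integral_norm hy.1
        _ ≤ ∫ t in (0:ℝ)..y, (Kc * Complex.abs (w t) + c2) := by
            apply intervalIntegral.integral_mono_on hy.1 hint1 hint2
            intro t ht
            exact hbnd t ht
        _ = Kc * (∫ t in (0:ℝ)..y, Complex.abs (w t)) + c2 * y := by
            rw [intervalIntegral.integral_add _ (intervalIntegrable_const)]
            · rw [intervalIntegral.integral_const_mul, intervalIntegral.integral_const]
              simp [mul_comm]
            · exact (continuous_const.mul (Complex.continuous_abs.comp hwc)).intervalIntegrable 0 y
        _ ≤ (2 * Real.exp (A * Real.pi) * C0 * Real.pi * Complex.abs (ρ - ρt))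
            + Kc * ∫ t in (0:ℝ)..y, (Complex.abs ∘ w) t := by
            have : c2 * y ≤ 2 * Real.exp (A * Real.pi) * C0 * Real.pi * Complex.abs (ρ - ρt) := by
              rw [hc2]
              have := hy.2
              nlinarith [Complex.abs.nonneg (ρ - ρt), Real.exp_pos (A * Real.pi), hy.1]
            have heq : (∫ t in (0:ℝ)..y, Complex.abs (w t))
                = ∫ t in (0:ℝ)..y, (Complex.abs ∘ w) t := rfl
            rw [← heq]
            linarith
    refine (key x hx).trans (le_of_eq ?_)
    rw [hC0]
    ring


noncomputable def Pic (qe : ℝ → ℂ) (h : ℂ) : ℕ → ℂ → ℝ → ℂ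
  | 0 => fun _ x => 1 + h * x
  | n+1 => fun l x => 1 + h * x
      + ∫ t in (0:ℝ)..x, ((x:ℂ) - t) * (qe t - l) * Pic qe h n l t

noncomputable def PicD (qe : ℝ → ℂ) (h : ℂ) : ℕ → ℂ → ℝ → ℂ
  | 0 => fun _ _ => 0
  | n+1 => fun l x => ∫ t in (0:ℝ)..x,
      ((x:ℂ) - t) * (-(Pic qe h n l t) + (qe t - l) * PicD qe h n l t)

lemma Pic_succ (qe : ℝ → ℂ) (h : ℂ) (n : ℕ) (l : ℂ) (x : ℝ) :
    Pic qe h (n+1) l x = 1 + h * x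
      + ∫ t in (0:ℝ)..x, ((x:ℂ) - t) * (qe t - l) * Pic qe h n l t := by
  simp [Pic]

lemma PicD_succ (qe : ℝ → ℂ) (h : ℂ) (n : ℕ) (l : ℂ) (x : ℝ) :
    PicD qe h (n+1) l x = ∫ t in (0:ℝ)..x,
      ((x:ℂ) - t) * (-(Pic qe h n l t) + (qe t - l) * PicD qe h n l t) := by
  simp [PicD]

lemma pic_props {qe : ℝ → ℂ} (hqe : Continuous qe) (h : ℂ) : ∀ n : ℕ,
    Continuous (uncurry (Pic qe h n)) ∧ Continuous (uncurry (PicD qe h n)) ∧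
    ∀ (l : ℂ) (x : ℝ), HasDerivAt (fun z => Pic qe h n z x) (PicD qe h n l x) l := by
  intro n
  induction n with
  | zero =>
    refine ⟨?_, ?_, ?_⟩
    · have he : uncurry (Pic qe h 0) = fun p : ℂ × ℝ => 1 + h * (p.2:ℂ) := by
        funext p; simp [Pic, uncurry]
      rw [he]; continuity
    · have he : uncurry (PicD qe h 0) = fun _ : ℂ × ℝ => (0:ℂ) := by
        funext p; simp [PicD, uncurry]
      rw [he]; continuity
    · intro l x
      have he : (fun z : ℂ => Pic qe h 0 z x) = fun _ => 1 + h * (x:ℂ) := by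
        funext z; simp [Pic]
      rw [he]
      have : PicD qe h 0 l x = 0 := by simp [PicD]
      rw [this]
      exact hasDerivAt_const l (1 + h * (x:ℂ))
  | succ n ih =>
    obtain ⟨hc, hd, hder⟩ := ih
    have hF : Continuous (fun p : (ℂ × ℝ) × ℝ =>
        ((p.1.2:ℂ) - p.2) * (qe p.2 - p.1.1) * Pic qe h n p.1.1 p.2) := by
      refine Continuous.mul (Continuous.mul ?_ ?_) ?_
      · exact ((Complex.continuous_ofReal.comp (continuous_snd.comp continuous_fst)).sub
          (Complex.continuous_ofReal.comp continuous_snd))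
      · exact ((hqe.comp continuous_snd).sub (continuous_fst.comp continuous_fst))
      · exact hc.comp ((continuous_fst.comp continuous_fst).prodMk continuous_snd)
    have hF' : Continuous (fun p : (ℂ × ℝ) × ℝ =>
        ((p.1.2:ℂ) - p.2) * (-(Pic qe h n p.1.1 p.2)
          + (qe p.2 - p.1.1) * PicD qe h n p.1.1 p.2)) := by
      refine Continuous.mul ?_ (Continuous.add ?_ ?_)
      · exact ((Complex.continuous_ofReal.comp (continuous_snd.comp continuous_fst)).sub
          (Complex.continuous_ofReal.comp continuous_snd))
      · exact (hc.comp ((continuous_fst.comp continuous_fst).prodMk continuous_snd)).neg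
      · exact ((hqe.comp continuous_snd).sub (continuous_fst.comp continuous_fst)).mul
          (hd.comp ((continuous_fst.comp continuous_fst).prodMk continuous_snd))
    have hcont1 : Continuous (uncurry (Pic qe h (n+1))) := by
      have h1 : Continuous (fun p : ℂ × ℝ => ∫ t in (0:ℝ)..p.2,
          ((p.2:ℂ) - t) * (qe t - p.1) * Pic qe h n p.1 t) :=
        continuous_parametric_intervalIntegral_of_continuous (μ := MeasureTheory.volume)
          (f := fun (p : ℂ × ℝ) (t : ℝ) => ((p.2:ℂ) - t) * (qe t - p.1) * Pic qe h n p.1 t)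
          hF continuous_snd
      have he : uncurry (Pic qe h (n+1)) = fun p : ℂ × ℝ => 1 + h * (p.2:ℂ)
          + ∫ t in (0:ℝ)..p.2, ((p.2:ℂ) - t) * (qe t - p.1) * Pic qe h n p.1 t := by
        funext p; simp [uncurry, Pic_succ]
      rw [he]
      exact (continuous_const.add (continuous_const.mul
        (Complex.continuous_ofReal.comp continuous_snd))).add h1
    have hcont2 : Continuous (uncurry (PicD qe h (n+1))) := by
      have h1 : Continuous (fun p : ℂ × ℝ => ∫ t in (0:ℝ)..p.2,
          ((p.2:ℂ) - t) * (-(Pic qe h n p.1 t) + (qe t - p.1) * PicD qe h n p.1 t)) :=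
        continuous_parametric_intervalIntegral_of_continuous (μ := MeasureTheory.volume)
          (f := fun (p : ℂ × ℝ) (t : ℝ) => ((p.2:ℂ) - t) * (-(Pic qe h n p.1 t)
            + (qe t - p.1) * PicD qe h n p.1 t))
          hF' continuous_snd
      have he : uncurry (PicD qe h (n+1)) = fun p : ℂ × ℝ => ∫ t in (0:ℝ)..p.2,
          ((p.2:ℂ) - t) * (-(Pic qe h n p.1 t) + (qe t - p.1) * PicD qe h n p.1 t) := by
        funext p; simp [uncurry, PicD_succ]
      rw [he]; exact h1
    refine ⟨hcont1, hcont2, ?_⟩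
    intro l₀ x
    obtain ⟨Mp, hMp⟩ := ((isCompact_closedBall l₀ 1).prod
      (isCompact_uIcc (a := (0:ℝ)) (b := x))).exists_bound_of_continuousOn hc.continuousOn
    obtain ⟨Md, hMd⟩ := ((isCompact_closedBall l₀ 1).prod
      (isCompact_uIcc (a := (0:ℝ)) (b := x))).exists_bound_of_continuousOn hd.continuousOn
    obtain ⟨Mq, hMq⟩ := (isCompact_uIcc (a := (0:ℝ)) (b := x)).exists_bound_of_continuousOn
      hqe.continuousOn
    have hmem0 : ((l₀, (0:ℝ)) : ℂ × ℝ) ∈ closedBall l₀ 1 ×ˢ uIcc (0:ℝ) x :=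
      ⟨mem_closedBall_self zero_le_one, left_mem_uIcc⟩
    have hMp0 : 0 ≤ Mp := le_trans (norm_nonneg _) (hMp _ hmem0)
    have hMd0 : 0 ≤ Md := le_trans (norm_nonneg _) (hMd _ hmem0)
    have hMq0 : 0 ≤ Mq := le_trans (norm_nonneg _) (hMq 0 left_mem_uIcc)
    set B : ℝ := |x| * (Mp + (Mq + ‖l₀‖ + 1) * Md) with hB
    have key := intervalIntegral.hasDerivAt_integral_of_dominated_loc_of_deriv_le
      (F := fun (z : ℂ) (t : ℝ) => ((x:ℂ) - t) * (qe t - z) * Pic qe h n z t)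
      (F' := fun (z : ℂ) (t : ℝ) => ((x:ℂ) - t) * (-(Pic qe h n z t)
        + (qe t - z) * PicD qe h n z t))
      (x₀ := l₀) (a := 0) (b := x) (bound := fun _ => B) (μ := MeasureTheory.volume)
      (s := ball l₀ 1) (ball_mem_nhds l₀ one_pos) ?_ ?_ ?_ ?_ ?_ ?_
    · have he : (fun z : ℂ => Pic qe h (n+1) z x) = fun z => (1 + h * (x:ℂ))
          + ∫ t in (0:ℝ)..x, ((x:ℂ) - t) * (qe t - z) * Pic qe h n z t := by
        funext z; simp [Pic_succ]
      rw [he, PicD_succ]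
      exact key.2.const_add (1 + h * (x:ℂ))
    · filter_upwards with z
      exact (hF.comp (((continuous_const (y := z)).prodMk
        (continuous_const (y := x))).prodMk continuous_id)).aestronglyMeasurable
    · exact (hF.comp (((continuous_const (y := l₀)).prodMk
        (continuous_const (y := x))).prodMk continuous_id)).intervalIntegrable 0 x
    · exact (hF'.comp (((continuous_const (y := l₀)).prodMk
        (continuous_const (y := x))).prodMk continuous_id)).aestronglyMeasurable
    · filter_upwards with t
      intro ht z hz
      have htu : t ∈ uIcc (0:ℝ) x := uIoc_subset_uIcc ht
      have hz' : z ∈ closedBall l₀ 1 := ball_subset_closedBall hz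
      have hxt : Complex.abs ((x:ℂ) - t) ≤ |x| := by
        have hc' : ((x:ℂ) - (t:ℂ)) = ((x - t : ℝ) : ℂ) := by push_cast; ring
        rw [hc', Complex.abs_ofReal]
        rcases le_total 0 x with hx0 | hx0
        · rw [uIcc_of_le hx0] at htu
          rw [_root_.abs_of_nonneg (by linarith [htu.2] : (0:ℝ) ≤ x - t),
            _root_.abs_of_nonneg hx0]
          linarith [htu.1]
        · rw [uIcc_of_ge hx0] at htu
          rw [_root_.abs_of_nonpos (by linarith [htu.1] : x - t ≤ 0),
            _root_.abs_of_nonpos hx0]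
          linarith [htu.2]
      have hqz : Complex.abs (qe t - z) ≤ Mq + ‖l₀‖ + 1 := by
        calc Complex.abs (qe t - z) ≤ Complex.abs (qe t) + Complex.abs z :=
              Complex.abs.sub_le_add _ _
          _ ≤ Mq + (‖l₀‖ + 1) := by
              apply add_le_add (hMq t htu)
              have hd' := mem_closedBall_iff_norm.1 hz'
              calc ‖z‖ = ‖(z - l₀) + l₀‖ := by ring_nf
                _ ≤ ‖z - l₀‖ + ‖l₀‖ := norm_add_le _ _
                _ ≤ ‖l₀‖ + 1 := by linarith
          _ = Mq + ‖l₀‖ + 1 := by ring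
      have hp : ‖Pic qe h n z t‖ ≤ Mp := hMp (z, t) ⟨hz', htu⟩
      have hdd : ‖PicD qe h n z t‖ ≤ Md := hMd (z, t) ⟨hz', htu⟩
      calc ‖((x:ℂ) - t) * (-(Pic qe h n z t) + (qe t - z) * PicD qe h n z t)‖
          = Complex.abs ((x:ℂ) - t) * ‖(-(Pic qe h n z t) + (qe t - z) * PicD qe h n z t)‖ := by
            rw [Complex.norm_eq_abs, map_mul]; rfl
        _ ≤ |x| * (Mp + (Mq + ‖l₀‖ + 1) * Md) := by
            apply mul_le_mul hxt _ (norm_nonneg _) (abs_nonneg x)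
            calc ‖(-(Pic qe h n z t) + (qe t - z) * PicD qe h n z t)‖
                ≤ ‖(Pic qe h n z t)‖ + ‖(qe t - z)‖ * ‖PicD qe h n z t‖ := by
                  refine (norm_add_le _ _).trans ?_
                  rw [norm_neg, norm_mul]
              _ ≤ Mp + (Mq + ‖l₀‖ + 1) * Md := by
                  apply add_le_add hp
                  exact mul_le_mul hqz hdd (norm_nonneg _) (by linarith [norm_nonneg l₀])
    · exact intervalIntegrable_const
    · filter_upwards with t
      intro ht z hz
      have h1 : HasDerivAt (fun z : ℂ => ((x:ℂ) - t) * (qe t - z)) (((x:ℂ) - t) * (-1)) z := by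
        have : HasDerivAt (fun z : ℂ => qe t - z) (-1) z := by
          simpa using (hasDerivAt_id z).const_sub (qe t)
        exact this.const_mul _
      have h2 := h1.mul (hder z t)
      refine h2.congr_deriv ?_
      ring


-- polynomial integral computation
lemma poly_int {x : ℝ} (hx : 0 ≤ x) (m : ℕ) :
    ∫ t in (0:ℝ)..x, ((x - t) * t^m) = x^(m+2) / ((m+1) * (m+2)) := by
  have h1 : ∀ t : ℝ, (x - t) * t^m = x * t^m - t^(m+1) := by intro t; ring
  have h2 : IntervalIntegrable (fun t : ℝ => x * t^m) MeasureTheory.volume 0 x :=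
    (Continuous.intervalIntegrable (by continuity) 0 x)
  have h3 : IntervalIntegrable (fun t : ℝ => t^(m+1)) MeasureTheory.volume 0 x :=
    (Continuous.intervalIntegrable (by continuity) 0 x)
  calc ∫ t in (0:ℝ)..x, ((x - t) * t^m)
      = ∫ t in (0:ℝ)..x, (x * t^m - t^(m+1)) := by
        apply intervalIntegral.integral_congr; intro t _; exact h1 t
    _ = (∫ t in (0:ℝ)..x, x * t^m) - ∫ t in (0:ℝ)..x, t^(m+1) :=
        intervalIntegral.integral_sub h2 h3
    _ = x * (x^(m+1) / (m+1)) - x^(m+2) / (m+2) := by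
        rw [intervalIntegral.integral_const_mul, integral_pow, integral_pow]
        norm_num [pow_succ]
        ring_nf
    _ = x^(m+2) / ((m+1) * (m+2)) := by
        have hm1 : ((m:ℝ) + 1) ≠ 0 := by positivity
        have hm2 : ((m:ℝ) + 2) ≠ 0 := by positivity
        field_simp
        ring

lemma taylor_eq {q qe : ℝ → ℂ} {h : ℂ} {φ φ' : ℂ → ℝ → ℂ}
    (hq : ContinuousOn q (Set.Icc 0 Real.pi)) (hqe : Continuous qe)
    (hagree : ∀ t ∈ Icc 0 Real.pi, qe t = q t)
    (hinit : ∀ l : ℂ, φ l 0 = 1 ∧ φ' l 0 = h)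
    (hode1 : ∀ l : ℂ, ∀ x : ℝ, HasDerivAt (φ l) (φ' l x) x)
    (hode2 : ∀ l : ℂ, ∀ x : ℝ, HasDerivAt (φ' l) ((q x - l) * φ l x) x)
    (l : ℂ) : ∀ x ∈ Icc 0 Real.pi,
    φ l x = 1 + h * x + ∫ t in (0:ℝ)..x, ((x:ℂ) - t) * (qe t - l) * φ l t := by
  intro x hx
  have hφc : Continuous (φ l) := by
    apply continuous_iff_continuousAt.2
    exact fun t => (hode1 l t).differentiableAt.continuousAt
  have hFc : ContinuousOn (fun t => (qe t - l) * φ l t) (Icc 0 x) :=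
    ((hqe.continuousOn.sub continuousOn_const).mul hφc.continuousOn)
  have hr := rep hx.1 0 (φ l) (φ' l) (fun t => (qe t - l) * φ l t) hFc (hode1 l)
    (fun t ht => by
      have ht' : t ∈ Icc 0 Real.pi := ⟨ht.1, ht.2.trans hx.2⟩
      refine (hode2 l t).congr_deriv ?_
      rw [hagree t ht']
      ring)
  rw [(hinit l).1, (hinit l).2] at hr
  rw [hr]
  have e1 : Complex.cos (0 * (x:ℂ)) = 1 := by simp
  have e2 : Kk 0 (x:ℂ) = (x:ℂ) := by simp [Kk]
  rw [e1, e2]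
  have e3 : (∫ t in (0:ℝ)..x, Kk 0 ((x:ℂ) - t) * ((qe t - l) * φ l t))
      = ∫ t in (0:ℝ)..x, ((x:ℂ) - t) * (qe t - l) * φ l t := by
    apply intervalIntegral.integral_congr
    intro t _
    simp [Kk, mul_assoc]
  rw [e3]
  ring

lemma pic_err {q qe : ℝ → ℂ} {h : ℂ} {φ φ' : ℂ → ℝ → ℂ}
    (hq : ContinuousOn q (Set.Icc 0 Real.pi)) (hqe : Continuous qe)
    (hagree : ∀ t ∈ Icc 0 Real.pi, qe t = q t)
    (hinit : ∀ l : ℂ, φ l 0 = 1 ∧ φ' l 0 = h)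
    (hode1 : ∀ l : ℂ, ∀ x : ℝ, HasDerivAt (φ l) (φ' l x) x)
    (hode2 : ∀ l : ℂ, ∀ x : ℝ, HasDerivAt (φ' l) ((q x - l) * φ l x) x)
    {Q : ℝ} (hQ : ∀ t ∈ Icc 0 Real.pi, Complex.abs (q t) ≤ Q)
    (l₀ : ℂ) : ∀ n : ℕ, ∀ l ∈ closedBall l₀ 1, ∀ x ∈ Icc 0 Real.pi,
    Complex.abs (φ l x - Pic qe h n l x) ≤
      ((1 + Complex.abs h * Real.pi) * Real.exp ((‖l₀‖ + 1) * Real.pi) *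
        Real.exp ((Q * Real.pi * Real.exp ((‖l₀‖ + 1) * Real.pi)) * Real.pi)
        + (1 + Complex.abs h * Real.pi))
      * (Q + ‖l₀‖ + 1) ^ n * x ^ (2*n) / (Nat.factorial (2*n)) := by
  have hQ0 : 0 ≤ Q := le_trans (Complex.abs.nonneg _) (hQ 0 (by constructor <;> positivity))
  set A' : ℝ := ‖l₀‖ + 1 with hA'
  set C1 : ℝ := (1 + Complex.abs h * Real.pi) * Real.exp (A' * Real.pi) *
      Real.exp ((Q * Real.pi * Real.exp (A' * Real.pi)) * Real.pi) with hC1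
  set Bc : ℝ := C1 + (1 + Complex.abs h * Real.pi) with hBc
  set Kc : ℝ := Q + ‖l₀‖ + 1 with hKc
  have hC10 : 0 ≤ C1 := by positivity
  have hBc0 : 0 ≤ Bc := by positivity
  have hKc0 : 0 ≤ Kc := by positivity
  -- a priori bound for l in the closed ball
  have hap : ∀ l ∈ closedBall l₀ 1, ∀ t ∈ Icc 0 Real.pi, Complex.abs (φ l t) ≤ C1 := by
    intro l hl t ht
    obtain ⟨ρ, hρ⟩ := IsAlgClosed.exists_pow_nat_eq l (n := 2) (by norm_num)
    have him : |ρ.im| ≤ A' := by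
      have h1 : Complex.abs ρ ^ 2 = Complex.abs l := by rw [← hρ, map_pow]
      have h2 : Complex.abs l ≤ ‖l₀‖ + 1 := by
        have := mem_closedBall_iff_norm.1 hl
        calc Complex.abs l = ‖l‖ := rfl
          _ = ‖(l - l₀) + l₀‖ := by ring_nf
          _ ≤ ‖l - l₀‖ + ‖l₀‖ := norm_add_le _ _
          _ ≤ ‖l₀‖ + 1 := by linarith
      have h3 : Complex.abs ρ ≤ ‖l₀‖ + 1 := by
        nlinarith [Complex.abs.nonneg ρ, norm_nonneg l₀]
      exact (Complex.abs_im_le_abs ρ).trans h3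
    have := apriori hq hinit hode1 hode2 hQ him t ht
    rw [hρ] at this
    exact this
  intro n
  induction n with
  | zero =>
    intro l hl x hx
    have e0 : Pic qe h 0 l x = 1 + h * x := by simp [Pic]
    rw [e0]
    simp only [Nat.mul_zero, pow_zero, Nat.factorial_zero, Nat.cast_one, mul_one, div_one]
    calc Complex.abs (φ l x - (1 + h * x))
        ≤ Complex.abs (φ l x) + Complex.abs (1 + h * x) := Complex.abs.sub_le_add _ _
      _ ≤ C1 + (1 + Complex.abs h * Real.pi) := by
          apply add_le_add (hap l hl x hx)
          calc Complex.abs (1 + h * x) ≤ Complex.abs 1 + Complex.abs (h * x) :=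
                Complex.abs.add_le _ _
            _ ≤ 1 + Complex.abs h * Real.pi := by
                rw [map_one, map_mul, Complex.abs_ofReal, _root_.abs_of_nonneg hx.1]
                have := hx.2
                nlinarith [Complex.abs.nonneg h]
      _ = Bc := hBc.symm
  | succ n ih =>
    intro l hl x hx
    have hφc : Continuous (φ l) := by
      apply continuous_iff_continuousAt.2
      exact fun t => (hode1 l t).differentiableAt.continuousAt
    have hpicc : Continuous (fun t => Pic qe h n l t) :=
      (pic_props hqe h n).1.comp (continuous_const.prodMk continuous_id)
    have hKcl : ∀ t ∈ Icc 0 Real.pi, Complex.abs (qe t - l) ≤ Kc := by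
      intro t ht
      rw [hagree t ht]
      calc Complex.abs (q t - l) ≤ Complex.abs (q t) + Complex.abs l :=
            Complex.abs.sub_le_add _ _
        _ ≤ Q + (‖l₀‖ + 1) := by
            apply add_le_add (hQ t ht)
            have := mem_closedBall_iff_norm.1 hl
            calc Complex.abs l = ‖(l - l₀) + l₀‖ := by rw [sub_add_cancel]; rfl
              _ ≤ ‖l - l₀‖ + ‖l₀‖ := norm_add_le _ _
              _ ≤ ‖l₀‖ + 1 := by linarith
        _ = Kc := by rw [hKc]; ring
    have c0 : Continuous (fun t : ℝ => ((x:ℂ) - t)) := by continuity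
    have cq : Continuous (fun t : ℝ => qe t - l) := hqe.sub continuous_const
    have hsub : φ l x - Pic qe h (n+1) l x
        = ∫ t in (0:ℝ)..x, ((x:ℂ) - t) * (qe t - l) * (φ l t - Pic qe h n l t) := by
      rw [taylor_eq hq hqe hagree hinit hode1 hode2 l x hx, Pic_succ]
      have hi1 : IntervalIntegrable (fun t => ((x:ℂ) - t) * (qe t - l) * φ l t)
          MeasureTheory.volume 0 x := ((c0.mul cq).mul hφc).intervalIntegrable 0 x
      have hi2 : IntervalIntegrable (fun t => ((x:ℂ) - t) * (qe t - l) * Pic qe h n l t)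
          MeasureTheory.volume 0 x := ((c0.mul cq).mul hpicc).intervalIntegrable 0 x
      have e1 : 1 + h * (x:ℂ) + (∫ t in (0:ℝ)..x, ((x:ℂ) - t) * (qe t - l) * φ l t)
          - (1 + h * (x:ℂ) + ∫ t in (0:ℝ)..x, ((x:ℂ) - t) * (qe t - l) * Pic qe h n l t)
          = (∫ t in (0:ℝ)..x, ((x:ℂ) - t) * (qe t - l) * φ l t)
            - ∫ t in (0:ℝ)..x, ((x:ℂ) - t) * (qe t - l) * Pic qe h n l t := by ring
      rw [e1, ← intervalIntegral.integral_sub hi1 hi2]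
      apply intervalIntegral.integral_congr
      intro t _
      ring
    rw [hsub]
    set c : ℝ := Kc * (Bc * Kc^n / (Nat.factorial (2*n))) with hc
    have hc0 : 0 ≤ c := by rw [hc]; positivity
    have hbnd : ∀ t ∈ Icc 0 x, ‖((x:ℂ) - t) * (qe t - l) * (φ l t - Pic qe h n l t)‖
        ≤ (x - t) * t^(2*n) * c := by
      intro t ht
      have ht' : t ∈ Icc 0 Real.pi := ⟨ht.1, ht.2.trans hx.2⟩
      have hxt : Complex.abs ((x:ℂ) - t) = x - t := by
        rw [show ((x:ℂ) - (t:ℂ)) = ((x - t : ℝ) : ℂ) from by push_cast; ring,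
          Complex.abs_ofReal, _root_.abs_of_nonneg (by linarith [ht.2])]
      have hdel := ih l hl t ht'
      rw [Complex.norm_eq_abs, map_mul, map_mul, hxt]
      calc (x - t) * Complex.abs (qe t - l) * Complex.abs (φ l t - Pic qe h n l t)
          ≤ (x - t) * Kc * (Bc * Kc ^ n * t ^ (2*n) / (Nat.factorial (2*n))) := by
            apply mul_le_mul (mul_le_mul_of_nonneg_left (hKcl t ht') (by linarith [ht.2]))
              hdel (Complex.abs.nonneg _)
            exact mul_nonneg (by linarith [ht.2]) hKc0
        _ = (x - t) * t^(2*n) * c := by rw [hc]; ring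
    have hnorm_int : IntervalIntegrable
        (fun t => ‖((x:ℂ) - t) * (qe t - l) * (φ l t - Pic qe h n l t)‖)
        MeasureTheory.volume 0 x :=
      (((c0.mul cq).mul (hφc.sub hpicc)).norm).intervalIntegrable 0 x
    have hrhs_int : IntervalIntegrable (fun t : ℝ => (x - t) * t^(2*n) * c)
        MeasureTheory.volume 0 x :=
      (((continuous_const.sub continuous_id).mul (continuous_pow _)).mul
        continuous_const).intervalIntegrable 0 x
    have hfac : ((Nat.factorial (2*(n+1))) : ℝ)
        = ((Nat.factorial (2*n)) : ℝ) * (2*(n:ℝ)+1) * (2*(n:ℝ)+2) := by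
      have he : 2*(n+1) = (2*n+1)+1 := by ring
      rw [he, Nat.factorial_succ, Nat.factorial_succ]
      push_cast
      ring
    calc Complex.abs (∫ t in (0:ℝ)..x, ((x:ℂ) - t) * (qe t - l) * (φ l t - Pic qe h n l t))
        ≤ ∫ t in (0:ℝ)..x, ‖((x:ℂ) - t) * (qe t - l) * (φ l t - Pic qe h n l t)‖ := by
          rw [← Complex.norm_eq_abs]
          exact intervalIntegral.norm_integral_le_integral_norm hx.1
      _ ≤ ∫ t in (0:ℝ)..x, ((x - t) * t^(2*n) * c) := by
          apply intervalIntegral.integral_mono_on hx.1 hnorm_int hrhs_int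
          exact hbnd
      _ = (∫ t in (0:ℝ)..x, ((x - t) * t^(2*n))) * c := by
          rw [← intervalIntegral.integral_mul_const]
      _ = x^(2*n+2) / ((2*(n:ℝ)+1) * (2*(n:ℝ)+2)) * c := by
          rw [poly_int hx.1 (2*n)]
          push_cast
          ring_nf
      _ = Bc * Kc ^ (n+1) * x ^ (2*(n+1)) / (Nat.factorial (2*(n+1))) := by
          rw [hfac, hc, show 2*(n+1) = 2*n+2 from by ring]
          have f0 : ((Nat.factorial (2*n)) : ℝ) ≠ 0 := by positivity
          have f1 : (2*(n:ℝ)+1) ≠ 0 := by positivity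
          have f2 : (2*(n:ℝ)+2) ≠ 0 := by positivity
          field_simp
          ring

lemma entire_lemma {q qe : ℝ → ℂ} {h : ℂ} {φ φ' : ℂ → ℝ → ℂ}
    (hq : ContinuousOn q (Set.Icc 0 Real.pi)) (hqe : Continuous qe)
    (hagree : ∀ t ∈ Icc 0 Real.pi, qe t = q t)
    (hinit : ∀ l : ℂ, φ l 0 = 1 ∧ φ' l 0 = h)
    (hode1 : ∀ l : ℂ, ∀ x : ℝ, HasDerivAt (φ l) (φ' l x) x)
    (hode2 : ∀ l : ℂ, ∀ x : ℝ, HasDerivAt (φ' l) ((q x - l) * φ l x) x)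
    {Q : ℝ} (hQ : ∀ t ∈ Icc 0 Real.pi, Complex.abs (q t) ≤ Q) :
    ∀ x ∈ Icc 0 Real.pi, ∀ l : ℂ, DifferentiableAt ℂ (fun z : ℂ => φ z x) l := by
  intro x hx l₀
  have hQ0 : 0 ≤ Q := le_trans (Complex.abs.nonneg _) (hQ 0 (by constructor <;> positivity))
  set Bc : ℝ := (1 + Complex.abs h * Real.pi) * Real.exp ((‖l₀‖ + 1) * Real.pi) *
      Real.exp ((Q * Real.pi * Real.exp ((‖l₀‖ + 1) * Real.pi)) * Real.pi)
      + (1 + Complex.abs h * Real.pi) with hBc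
  set Kc : ℝ := Q + ‖l₀‖ + 1 with hKc
  have hBc0 : 0 ≤ Bc := by rw [hBc]; positivity
  have hKc0 : 0 ≤ Kc := by rw [hKc]; positivity
  set D : ℝ := max (Kc * Real.pi^2) 1 with hD
  have hD1 : (1:ℝ) ≤ D := le_max_right _ _
  have hD0 : 0 ≤ D := zero_le_one.trans hD1
  have hbound : ∀ n : ℕ, ∀ z ∈ ball l₀ 1,
      dist (φ z x) (Pic qe h n z x) ≤ Bc * D^n / (Nat.factorial n) := by
    intro n z hz
    have h1 := pic_err hq hqe hagree hinit hode1 hode2 hQ l₀ n z (ball_subset_closedBall hz) x hx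
    rw [dist_eq_norm, Complex.norm_eq_abs]
    refine h1.trans ?_
    have hx2 : Kc^n * x^(2*n) ≤ D^n := by
      have e1 : Kc^n * x^(2*n) = (Kc * x^2)^n := by
        rw [mul_pow, ← pow_mul]
      rw [e1]
      apply pow_le_pow_left₀ (by positivity)
      calc Kc * x^2 ≤ Kc * Real.pi^2 := by
            apply mul_le_mul_of_nonneg_left _ hKc0
            nlinarith [hx.1, hx.2]
        _ ≤ D := le_max_left _ _
    have hfle : (Nat.factorial n : ℝ) ≤ (Nat.factorial (2*n) : ℝ) := by
      exact_mod_cast Nat.factorial_le (by omega)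
    have hf0 : (0:ℝ) < (Nat.factorial n : ℝ) := by positivity
    have hf0' : (0:ℝ) < (Nat.factorial (2*n) : ℝ) := by positivity
    calc Bc * Kc^n * x^(2*n) / (Nat.factorial (2*n))
        = Bc * (Kc^n * x^(2*n)) / (Nat.factorial (2*n)) := by ring
      _ ≤ Bc * D^n / (Nat.factorial (2*n)) := by gcongr
      _ ≤ Bc * D^n / (Nat.factorial n) := by
          apply div_le_div₀ (by positivity) le_rfl hf0 hfle
  have htend : Filter.Tendsto (fun n : ℕ => Bc * D^n / (Nat.factorial n))
      Filter.atTop (nhds 0) := by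
    have h1 := FloorSemiring.tendsto_pow_div_factorial_atTop (K := ℝ) D
    have h2 := h1.const_mul Bc
    simpa [mul_div_assoc] using h2
  have htu : TendstoUniformlyOn (fun n z => Pic qe h n z x) (fun z => φ z x)
      Filter.atTop (ball l₀ 1) := by
    rw [Metric.tendstoUniformlyOn_iff]
    intro ε hε
    have hev : ∀ᶠ n in Filter.atTop, Bc * D^n / (Nat.factorial n) < ε :=
      htend.eventually (gt_mem_nhds hε)
    filter_upwards [hev] with n hn z hz
    exact lt_of_le_of_lt (hbound n z hz) hn
  have hdiffs : ∀ n : ℕ, DifferentiableOn ℂ (fun z => Pic qe h n z x) (ball l₀ 1) :=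
    fun n z _ => ((pic_props hqe h n).2.2 z x).differentiableAt.differentiableWithinAt
  have hres := (htu.tendstoLocallyUniformlyOn).differentiableOn
    (Filter.Eventually.of_forall hdiffs) isOpen_ball
  exact hres.differentiableAt (isOpen_ball.mem_nhds (mem_ball_self one_pos))

/-- Entirety of `λ ↦ φ(x, λ)` and the Lipschitz bound `|φ(x, ρ²) - φ(x, ρ̃²)| ≤ C|ρ - ρ̃|`
for `ρ, ρ̃` in a fixed horizontal strip with nonnegative real part. -/
theorem phi_entire_and_lipschitz (q : ℝ → ℂ) (h : ℂ)
    (hq : ContinuousOn q (Set.Icc 0 Real.pi))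
    (φ φ' : ℂ → ℝ → ℂ)
    (hinit : ∀ l : ℂ, φ l 0 = 1 ∧ φ' l 0 = h)
    (hode1 : ∀ l : ℂ, ∀ x : ℝ, HasDerivAt (φ l) (φ' l x) x)
    (hode2 : ∀ l : ℂ, ∀ x : ℝ, HasDerivAt (φ' l) ((q x - l) * φ l x) x) :
    (∀ x ∈ Set.Icc 0 Real.pi, ∀ l : ℂ, DifferentiableAt ℂ (fun z : ℂ => φ z x) l) ∧
    (∀ A : ℝ, 0 < A → ∃ C > 0, ∀ ρ ρt : ℂ,
      |ρ.im| ≤ A → |ρt.im| ≤ A → 0 ≤ ρ.re → 0 ≤ ρt.re →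
      ∀ x ∈ Set.Icc 0 Real.pi,
        ‖φ (ρ ^ 2) x - φ (ρt ^ 2) x‖ ≤ C * ‖ρ - ρt‖) := by
  obtain ⟨Q, hQn⟩ := isCompact_Icc.exists_bound_of_continuousOn hq
  have hQ : ∀ t ∈ Icc 0 Real.pi, Complex.abs (q t) ≤ Q := fun t ht => hQn t ht
  set qe : ℝ → ℂ := IccExtend Real.pi_pos.le ((Icc (0:ℝ) Real.pi).restrict q) with hqedef
  have hqe : Continuous qe := by
    rw [hqedef, continuous_IccExtend_iff]
    exact continuousOn_iff_continuous_restrict.1 hq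
  have hagree : ∀ t ∈ Icc 0 Real.pi, qe t = q t := by
    intro t ht
    rw [hqedef, IccExtend_of_mem _ _ ht]
    rfl
  constructor
  · exact entire_lemma hq hqe hagree hinit hode1 hode2 hQ
  · intro A hA
    refine ⟨(2 * Real.exp (A * Real.pi) *
        ((1 + Complex.abs h * Real.pi) * Real.exp (A * Real.pi) *
          Real.exp ((Q * Real.pi * Real.exp (A * Real.pi)) * Real.pi)) * Real.pi) *
        Real.exp ((Q * Real.pi * Real.exp (A * Real.pi)) * Real.pi), by positivity, ?_⟩
    intro ρ ρt h1 h2 _ _ x hx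
    rcases le_total (Complex.abs ρt) (Complex.abs ρ) with hle | hle
    · exact lip_half hq hinit hode1 hode2 hQ h1 h2 hle x hx
    · have hswap := lip_half hq hinit hode1 hode2 hQ h2 h1 hle x hx
      rw [norm_sub_rev (φ _ x), norm_sub_rev ρ]
      exact hswap
end

section
/- Let D(x, λ, ξ) = ∫₀ˣ φ(t, λ) φ(t, ξ) dt where φ(x,λ) is the Sturm–Liouville solution with φ(0,λ)=1, φ'(0,λ)=h and continuous potential q on [0,π]. Then for λ on a fixed compact set K ⊂ ℂ and λ_n, λ̃_n with ρ_n = √λ_n, ρ̃_n = √λ̃_n satisfying |ρ_n - n| ≤ 1 and |ρ̃_n - n| ≤ 1 (n ≥ 1), there is a constant C with |D(x, λ, λ̃_n) - D(x, λ, λ_n)| ≤ C |ρ_n - ρ̃_n| for all x ∈ [0,π], λ ∈ K, n ≥ 1. -/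
open Set Real

lemma gronwallBound_le' {δ K ε t : ℝ} (hδ : 0 ≤ δ) (hK : 0 ≤ K) (hε : 0 ≤ ε)
    (ht0 : 0 ≤ t) (htπ : t ≤ π) :
    gronwallBound δ K ε t ≤ (δ + ε * π) * Real.exp (K * π) := by
  have hexp1 : (1:ℝ) ≤ Real.exp (K * π) :=
    Real.one_le_exp (mul_nonneg hK pi_pos.le)
  have hmono : Real.exp (K * t) ≤ Real.exp (K * π) :=
    Real.exp_le_exp.2 (by nlinarith)
  by_cases hKz : K = 0
  · subst hKz
    simp only [gronwallBound_K0, zero_mul, Real.exp_zero, mul_one]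
    nlinarith [mul_le_mul_of_nonneg_left htπ hε]
  · have hKpos : 0 < K := lt_of_le_of_ne hK (Ne.symm hKz)
    rw [gronwallBound_of_K_ne_0 hKz]
    -- e^{Kt} - 1 ≤ K t e^{Kt}
    have key : Real.exp (K * t) - 1 ≤ K * t * Real.exp (K * t) := by
      have h1 : 1 - K * t ≤ Real.exp (-(K * t)) := by
        have := Real.add_one_le_exp (-(K * t)); linarith
      have h2 : Real.exp (-(K*t)) * Real.exp (K*t) = 1 := by
        rw [← Real.exp_add]; simp
      nlinarith [Real.exp_pos (K*t)]
    have h3 : ε / K * (Real.exp (K * t) - 1) ≤ ε * t * Real.exp (K * t) := by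
      rw [div_mul_eq_mul_div, div_le_iff₀ hKpos]
      nlinarith
    have h4 : ε * t * Real.exp (K * t) ≤ ε * π * Real.exp (K * π) := by
      have h5 : t * Real.exp (K * t) ≤ π * Real.exp (K * π) :=
        mul_le_mul htπ hmono (Real.exp_pos _).le pi_pos.le
      nlinarith
    nlinarith [mul_le_mul_of_nonneg_left hmono hδ]

lemma pair_gronwall {f f' : ℝ → ℂ × ℂ} {Kc ε δ : ℝ} (hK : 0 ≤ Kc) (hε : 0 ≤ ε)
    (hf : ∀ t, HasDerivAt f (f' t) t)
    (bound : ∀ t ∈ Icc (0:ℝ) π, ‖f' t‖ ≤ Kc * ‖f t‖ + ε)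
    (hδ : ‖f 0‖ ≤ δ) :
    ∀ t ∈ Icc (0:ℝ) π, ‖f t‖ ≤ (δ + ε * π) * Real.exp (Kc * π) := by
  intro t ht
  have h1 := norm_le_gronwallBound_of_norm_deriv_right_le (a := 0) (b := π)
    (f := f) (f' := f') (δ := δ) (K := Kc) (ε := ε)
    (fun s _ => (hf s).continuousAt.continuousWithinAt)
    (fun s _ => (hf s).hasDerivWithinAt)
    hδ (fun s hs => bound s (Ico_subset_Icc_self hs)) t ht
  calc ‖f t‖ ≤ gronwallBound δ Kc ε (t - 0) := h1
    _ ≤ (δ + ε * π) * Real.exp (Kc * π) := by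
        rw [sub_zero]
        exact gronwallBound_le' (le_trans (norm_nonneg _) hδ) hK hε ht.1 ht.2

lemma crude_estimate (q : ℝ → ℂ) {Q R : ℝ} (hQ0 : 0 ≤ Q) (hR0 : 0 ≤ R)
    (hq' : ∀ t ∈ Icc (0:ℝ) π, ‖q t‖ ≤ Q)
    {l : ℂ} (hl : ‖l‖ ≤ R)
    (u u' r : ℝ → ℂ)
    (hu : ∀ t, HasDerivAt u (u' t) t)
    (hu' : ∀ t, HasDerivAt u' ((q t - l) * u t + r t) t)
    {ε₀ δ₀ : ℝ} (hε₀ : 0 ≤ ε₀) (hr : ∀ t ∈ Icc (0:ℝ) π, ‖r t‖ ≤ ε₀)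
    (h0 : ‖u 0‖ ≤ δ₀) (h0' : ‖u' 0‖ ≤ δ₀) :
    ∀ t ∈ Icc (0:ℝ) π, ‖u t‖ ≤ (δ₀ + ε₀ * π) * Real.exp ((1 + Q + R) * π) := by
  set f : ℝ → ℂ × ℂ := fun t => (u t, u' t) with hf_def
  set f' : ℝ → ℂ × ℂ := fun t => (u' t, (q t - l) * u t + r t) with hf'_def
  have hf : ∀ t, HasDerivAt f (f' t) t := fun t => (hu t).prodMk (hu' t)
  have hKnn : (0:ℝ) ≤ 1 + Q + R := by linarith
  have bound : ∀ t ∈ Icc (0:ℝ) π, ‖f' t‖ ≤ (1 + Q + R) * ‖f t‖ + ε₀ := by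
    intro t ht
    have h1 : ‖u t‖ ≤ ‖f t‖ := le_max_left _ _
    have h2 : ‖u' t‖ ≤ ‖f t‖ := le_max_right _ _
    have hfnn : (0:ℝ) ≤ ‖f t‖ := norm_nonneg _
    rw [Prod.norm_def]
    refine max_le ?_ ?_
    · nlinarith
    · calc ‖(q t - l) * u t + r t‖ ≤ ‖(q t - l) * u t‖ + ‖r t‖ := norm_add_le _ _
        _ ≤ (Q + R) * ‖u t‖ + ε₀ := by
            rw [norm_mul]
            have : ‖q t - l‖ ≤ Q + R := le_trans (norm_sub_le _ _)
              (add_le_add (hq' t ht) hl)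
            have := hr t ht
            nlinarith [norm_nonneg (u t), norm_nonneg (q t - l)]
        _ ≤ (1 + Q + R) * ‖f t‖ + ε₀ := by nlinarith
  have hδ : ‖f 0‖ ≤ δ₀ := by
    rw [Prod.norm_def]; exact max_le h0 h0'
  intro t ht
  exact le_trans (le_max_left _ _ : ‖u t‖ ≤ ‖f t‖)
    (pair_gronwall hKnn hε₀ hf bound hδ t ht)

lemma strip_estimate (q : ℝ → ℂ) {Q : ℝ} (hQ0 : 0 ≤ Q)
    (hq' : ∀ t ∈ Icc (0:ℝ) π, ‖q t‖ ≤ Q)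
    {ρ : ℂ} (him : |ρ.im| ≤ 1) (hρ : 1 ≤ ‖ρ‖)
    (u u' r : ℝ → ℂ)
    (hu : ∀ t, HasDerivAt u (u' t) t)
    (hu' : ∀ t, HasDerivAt u' ((q t - ρ^2) * u t + r t) t)
    {ε₀ δ₀ : ℝ} (hε₀ : 0 ≤ ε₀) (hr : ∀ t ∈ Icc (0:ℝ) π, ‖r t‖ ≤ ε₀)
    (h0m : ‖u' 0 - Complex.I * ρ * u 0‖ ≤ δ₀)
    (h0p : ‖u' 0 + Complex.I * ρ * u 0‖ ≤ δ₀) :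
    ∀ t ∈ Icc (0:ℝ) π, ‖u t‖ ≤
      Real.exp π * ((δ₀ + Real.exp π * ε₀ * π) *
        Real.exp (Q * Real.exp (2 * π) * π)) / ‖ρ‖ := by
  have hρ0 : ρ ≠ 0 := by
    intro hz; rw [hz, norm_zero] at hρ; linarith
  set E : ℝ → ℂ := fun s => Complex.exp (Complex.I * ρ * s) with hE_def
  set F : ℝ → ℂ := fun s => Complex.exp (-(Complex.I * ρ) * s) with hF_def
  have hE : ∀ t : ℝ, HasDerivAt E (Complex.I * ρ * E t) t := by
    intro t
    have h1 : HasDerivAt (fun z : ℂ => Complex.exp (Complex.I * ρ * z))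
        (Complex.exp (Complex.I * ρ * (t:ℂ)) * (Complex.I * ρ * 1)) (t:ℂ) :=
      ((hasDerivAt_id (t:ℂ)).const_mul (Complex.I * ρ)).cexp
    simpa [hE_def, mul_one, mul_comm] using h1.comp_ofReal
  have hF : ∀ t : ℝ, HasDerivAt F (-(Complex.I * ρ) * F t) t := by
    intro t
    have h1 : HasDerivAt (fun z : ℂ => Complex.exp (-(Complex.I * ρ) * z))
        (Complex.exp (-(Complex.I * ρ) * (t:ℂ)) * (-(Complex.I * ρ) * 1)) (t:ℂ) :=
      ((hasDerivAt_id (t:ℂ)).const_mul (-(Complex.I * ρ))).cexp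
    simpa [hF_def, mul_one, mul_comm] using h1.comp_ofReal
  set w : ℝ → ℂ × ℂ := fun t =>
    ((u' t - Complex.I * ρ * u t) * E t, (u' t + Complex.I * ρ * u t) * F t) with hw_def
  set w' : ℝ → ℂ × ℂ := fun t =>
    ((q t * u t + r t) * E t, (q t * u t + r t) * F t) with hw'_def
  have hw : ∀ t, HasDerivAt (fun s => (w s).1) ((w' t).1) t := by
    intro t
    have h1 := ((hu' t).sub ((hu t).const_mul (Complex.I * ρ))).mul (hE t)
    refine h1.congr_deriv ?_
    simp only [hw'_def, Pi.sub_apply, Pi.add_apply]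
    linear_combination (-(ρ^2 * u t * E t)) * Complex.I_mul_I
  have hw2 : ∀ t, HasDerivAt (fun s => (w s).2) ((w' t).2) t := by
    intro t
    have h1 := ((hu' t).add ((hu t).const_mul (Complex.I * ρ))).mul (hF t)
    refine h1.congr_deriv ?_
    simp only [hw'_def, Pi.sub_apply, Pi.add_apply]
    linear_combination (-(ρ^2 * u t * F t)) * Complex.I_mul_I
  have hwd : ∀ t, HasDerivAt w (w' t) t := fun t => (hw t).prodMk (hw2 t)
  -- bounds on |E|, |F| on [0, π]
  have hEb : ∀ t ∈ Icc (0:ℝ) π, ‖E t‖ ≤ Real.exp π := by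
    intro t ht
    rw [hE_def]
    simp only [Complex.norm_exp]
    apply Real.exp_le_exp.2
    have : (Complex.I * ρ * (t:ℂ)).re = -ρ.im * t := by
      simp [Complex.mul_re]
    rw [this]
    nlinarith [abs_le.1 him, ht.1, ht.2]
  have hFb : ∀ t ∈ Icc (0:ℝ) π, ‖F t‖ ≤ Real.exp π := by
    intro t ht
    rw [hF_def]
    simp only [Complex.norm_exp]
    apply Real.exp_le_exp.2
    have : (-(Complex.I * ρ) * (t:ℂ)).re = ρ.im * t := by
      simp [Complex.mul_re]
    rw [this]
    nlinarith [abs_le.1 him, ht.1, ht.2]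
  -- recovery of u from w
  have hEF : ∀ t : ℝ, F t * E t = 1 := by
    intro t
    rw [hE_def, hF_def]
    simp only [← Complex.exp_add]
    norm_num
  have hrec : ∀ t : ℝ, 2 * Complex.I * ρ * u t = (w t).2 * E t - (w t).1 * F t := by
    intro t
    simp only [hw_def]
    have h := hEF t
    linear_combination (-(2 * Complex.I * ρ * u t)) * h
  have hub : ∀ t ∈ Icc (0:ℝ) π, ‖u t‖ ≤ Real.exp π * ‖w t‖ / ‖ρ‖ := by
    intro t ht
    have h1 : ‖2 * Complex.I * ρ * u t‖ = 2 * ‖ρ‖ * ‖u t‖ := by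
      have h2 : ‖(2:ℂ)‖ = 2 := by norm_num
      simp [norm_mul, Complex.norm_I, h2]
    have h2 : ‖(w t).2 * E t - (w t).1 * F t‖ ≤ 2 * Real.exp π * ‖w t‖ := by
      calc ‖(w t).2 * E t - (w t).1 * F t‖ ≤ ‖(w t).2 * E t‖ + ‖(w t).1 * F t‖ :=
            norm_sub_le _ _
        _ = ‖(w t).2‖ * ‖E t‖ + ‖(w t).1‖ * ‖F t‖ := by simp only [norm_mul]
        _ ≤ ‖w t‖ * Real.exp π + ‖w t‖ * Real.exp π := by
            have := norm_nonneg (w t)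
            exact add_le_add
              (mul_le_mul (norm_snd_le (w t)) (hEb t ht) (norm_nonneg _) this)
              (mul_le_mul (norm_fst_le (w t)) (hFb t ht) (norm_nonneg _) this)
        _ = 2 * Real.exp π * ‖w t‖ := by ring
    have h3 : 2 * ‖ρ‖ * ‖u t‖ ≤ 2 * Real.exp π * ‖w t‖ := by
      rw [← h1, hrec t]; exact h2
    have hρpos : (0:ℝ) < ‖ρ‖ := by linarith
    rw [le_div_iff₀ hρpos]
    nlinarith [norm_nonneg (u t)]
  -- Gronwall on w
  have hρpos : (0:ℝ) < ‖ρ‖ := by linarith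
  have hbound : ∀ t ∈ Icc (0:ℝ) π, ‖w' t‖ ≤
      (Q * Real.exp (2 * π)) * ‖w t‖ + Real.exp π * ε₀ := by
    intro t ht
    have hq1 : ‖q t * u t + r t‖ ≤ Q * ‖u t‖ + ε₀ := by
      calc ‖q t * u t + r t‖ ≤ ‖q t‖ * ‖u t‖ + ‖r t‖ := by
            rw [← norm_mul]; exact norm_add_le _ _
        _ ≤ Q * ‖u t‖ + ε₀ :=
            add_le_add (mul_le_mul_of_nonneg_right (hq' t ht) (norm_nonneg _)) (hr t ht)
    have hu1 : ‖u t‖ ≤ Real.exp π * ‖w t‖ := by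
      have := hub t ht
      have h6 : Real.exp π * ‖w t‖ / ‖ρ‖ ≤ Real.exp π * ‖w t‖ := by
        apply div_le_self (by positivity) hρ
      linarith
    have hE1 := hEb t ht
    have hF1 := hFb t ht
    have hmax : ‖w' t‖ ≤ ‖q t * u t + r t‖ * Real.exp π := by
      rw [Prod.norm_def]
      refine max_le ?_ ?_
      · rw [norm_mul]
        exact mul_le_mul_of_nonneg_left hE1 (norm_nonneg _)
      · rw [norm_mul]
        exact mul_le_mul_of_nonneg_left hF1 (norm_nonneg _)
    have hexp2 : Real.exp π * Real.exp π = Real.exp (2 * π) := by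
      rw [← Real.exp_add]; ring_nf
    have c1 : ‖w' t‖ ≤ (Q * ‖u t‖ + ε₀) * Real.exp π :=
      le_trans hmax (mul_le_mul_of_nonneg_right hq1 (Real.exp_pos π).le)
    have c2 : Q * ‖u t‖ ≤ Q * (Real.exp π * ‖w t‖) := mul_le_mul_of_nonneg_left hu1 hQ0
    have c3 : (Q * ‖u t‖ + ε₀) * Real.exp π ≤ (Q * (Real.exp π * ‖w t‖) + ε₀) * Real.exp π :=
      mul_le_mul_of_nonneg_right (add_le_add c2 le_rfl) (Real.exp_pos π).le
    have c4 : (Q * (Real.exp π * ‖w t‖) + ε₀) * Real.exp π =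
        Q * Real.exp (2 * π) * ‖w t‖ + Real.exp π * ε₀ := by
      rw [← hexp2]; ring
    linarith [c1, c3]
  have hδw : ‖w 0‖ ≤ δ₀ := by
    have hE0 : E 0 = 1 := by simp [hE_def]
    have hF0 : F 0 = 1 := by simp [hF_def]
    rw [Prod.norm_def]
    simp only [hw_def, hE0, hF0, mul_one]
    exact max_le h0m h0p
  have hKc : (0:ℝ) ≤ Q * Real.exp (2 * π) := mul_nonneg hQ0 (Real.exp_pos _).le
  have hεc : (0:ℝ) ≤ Real.exp π * ε₀ := mul_nonneg (Real.exp_pos _).le hε₀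
  have hwb := pair_gronwall hKc hεc hwd hbound hδw
  intro t ht
  calc ‖u t‖ ≤ Real.exp π * ‖w t‖ / ‖ρ‖ := hub t ht
    _ ≤ Real.exp π * ((δ₀ + Real.exp π * ε₀ * π) *
        Real.exp (Q * Real.exp (2 * π) * π)) / ‖ρ‖ := by
        gcongr
        exact hwb t ht


section Wrappers

variable (q : ℝ → ℂ) (h : ℂ) (φ φ' : ℂ → ℝ → ℂ)
variable (hinit : ∀ l : ℂ, φ l 0 = 1 ∧ φ' l 0 = h)
variable (hode1 : ∀ l : ℂ, ∀ x : ℝ, HasDerivAt (φ l) (φ' l x) x)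
variable (hode2 : ∀ l : ℂ, ∀ x : ℝ, HasDerivAt (φ' l) ((q x - l) * φ l x) x)
variable {Q : ℝ} (hQ0 : 0 ≤ Q) (hq' : ∀ t ∈ Icc (0:ℝ) π, ‖q t‖ ≤ Q)

include hinit hode1 hode2 hQ0 hq' in
/-- Crude bound for `‖φ l t‖` when `‖l‖ ≤ R`. -/
lemma phi_crude {R : ℝ} (hR0 : 0 ≤ R) {l : ℂ} (hl : ‖l‖ ≤ R) :
    ∀ t ∈ Icc (0:ℝ) π, ‖φ l t‖ ≤ (1 + ‖h‖) * Real.exp ((1 + Q + R) * π) := by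
  have h1 : ∀ t, HasDerivAt (φ' l) ((q t - l) * φ l t + (fun _ : ℝ => (0:ℂ)) t) t := by
    intro t; simpa using hode2 l t
  have h2 := crude_estimate q hQ0 hR0 hq' hl (φ l) (φ' l) (fun _ => 0)
    (hode1 l) h1 (le_refl (0:ℝ)) (fun t _ => by simp)
    (δ₀ := 1 + ‖h‖)
    (by rw [(hinit l).1, norm_one]; linarith [norm_nonneg h])
    (by rw [(hinit l).2]; linarith)
  intro t ht
  have := h2 t ht
  simpa using this

include hinit hode1 hode2 hQ0 hq' in
/-- Crude Lipschitz estimate in the spectral parameter on a ball. -/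
lemma phi_crude_lip {ξ ξt : ℂ} (h9 : ‖ξ‖ ≤ 9) (h9' : ‖ξt‖ ≤ 9) :
    ∀ t ∈ Icc (0:ℝ) π, ‖φ ξt t - φ ξ t‖ ≤
      ‖ξ - ξt‖ * ((1 + ‖h‖) * Real.exp ((1 + Q + 9) * π)) * π *
        Real.exp ((1 + Q + 9) * π) := by
  have hB := phi_crude q h φ φ' hinit hode1 hode2 hQ0 hq' (by norm_num : (0:ℝ) ≤ 9) h9
  set A : ℝ := (1 + ‖h‖) * Real.exp ((1 + Q + 9) * π) with hA_def
  have hA0 : 0 ≤ A := by positivity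
  have hu : ∀ t, HasDerivAt (fun s => φ ξt s - φ ξ s) (φ' ξt t - φ' ξ t) t :=
    fun t => (hode1 ξt t).sub (hode1 ξ t)
  have hu' : ∀ t, HasDerivAt (fun s => φ' ξt s - φ' ξ s)
      ((q t - ξt) * (φ ξt t - φ ξ t) + (ξ - ξt) * φ ξ t) t := by
    intro t
    have := (hode2 ξt t).sub (hode2 ξ t)
    refine (this.congr_deriv ?_).congr_deriv rfl
    ring
  have h2 := crude_estimate q hQ0 (by norm_num : (0:ℝ) ≤ 9) hq' h9'
    (fun s => φ ξt s - φ ξ s) (fun s => φ' ξt s - φ' ξ s)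
    (fun s => (ξ - ξt) * φ ξ s) hu hu'
    (ε₀ := ‖ξ - ξt‖ * A) (mul_nonneg (norm_nonneg _) hA0)
    (fun t ht => by
      rw [norm_mul]
      exact mul_le_mul_of_nonneg_left (hB t ht) (norm_nonneg _))
    (δ₀ := 0)
    (by simp [(hinit ξ).1, (hinit ξt).1]) (by simp [(hinit ξ).2, (hinit ξt).2])
  intro t ht
  have := h2 t ht
  calc ‖φ ξt t - φ ξ t‖ ≤ (0 + ‖ξ - ξt‖ * A * π) * Real.exp ((1 + Q + 9) * π) := this
    _ = ‖ξ - ξt‖ * A * π * Real.exp ((1 + Q + 9) * π) := by ring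

include hinit hode1 hode2 hQ0 hq' in
/-- Uniform bound for `‖φ (ρ^2) t‖` on the strip `|Im ρ| ≤ 1`, `‖ρ‖ ≥ 1`. -/
lemma phi_strip {ρ : ℂ} (him : |ρ.im| ≤ 1) (hρ : 1 ≤ ‖ρ‖) :
    ∀ t ∈ Icc (0:ℝ) π, ‖φ (ρ^2) t‖ ≤
      (‖h‖ + 1) * Real.exp π * Real.exp (Q * Real.exp (2 * π) * π) := by
  have h1 : ∀ t, HasDerivAt (φ' (ρ^2)) ((q t - ρ^2) * φ (ρ^2) t + (fun _ : ℝ => (0:ℂ)) t) t := by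
    intro t; simpa using hode2 (ρ^2) t
  have hIρ : ‖Complex.I * ρ‖ = ‖ρ‖ := by
    rw [norm_mul, Complex.norm_I, one_mul]
  have h0m : ‖φ' (ρ^2) 0 - Complex.I * ρ * φ (ρ^2) 0‖ ≤ ‖h‖ + ‖ρ‖ := by
    rw [(hinit (ρ^2)).1, (hinit (ρ^2)).2, mul_one]
    calc ‖h - Complex.I * ρ‖ ≤ ‖h‖ + ‖Complex.I * ρ‖ := norm_sub_le _ _
      _ = ‖h‖ + ‖ρ‖ := by rw [hIρ]
  have h0p : ‖φ' (ρ^2) 0 + Complex.I * ρ * φ (ρ^2) 0‖ ≤ ‖h‖ + ‖ρ‖ := by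
    rw [(hinit (ρ^2)).1, (hinit (ρ^2)).2, mul_one]
    calc ‖h + Complex.I * ρ‖ ≤ ‖h‖ + ‖Complex.I * ρ‖ := norm_add_le _ _
      _ = ‖h‖ + ‖ρ‖ := by rw [hIρ]
  have h2 := strip_estimate q hQ0 hq' him hρ (φ (ρ^2)) (φ' (ρ^2)) (fun _ => 0)
    (hode1 (ρ^2)) h1 (le_refl (0:ℝ)) (fun t _ => by simp) h0m h0p
  intro t ht
  have h3 := h2 t ht
  have hρpos : (0:ℝ) < ‖ρ‖ := by linarith
  rw [le_div_iff₀ hρpos] at h3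
  have hmid : Real.exp π * ((‖h‖ + ‖ρ‖ + Real.exp π * 0 * π) *
      Real.exp (Q * Real.exp (2 * π) * π)) ≤
      (‖h‖ + 1) * Real.exp π * Real.exp (Q * Real.exp (2 * π) * π) * ‖ρ‖ := by
    have hhρ : ‖h‖ + ‖ρ‖ ≤ (‖h‖ + 1) * ‖ρ‖ := by
      nlinarith [norm_nonneg h]
    nlinarith [Real.exp_pos π, Real.exp_pos (Q * Real.exp (2 * π) * π),
      mul_le_mul_of_nonneg_right hhρ
        (mul_nonneg (Real.exp_pos π).le (Real.exp_pos (Q * Real.exp (2 * π) * π)).le)]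
  exact le_of_mul_le_mul_right (le_trans h3 hmid) hρpos

include hinit hode1 hode2 hQ0 hq' in
/-- Lipschitz estimate in `ρ` on the strip, in multiplied-out form. -/
lemma phi_strip_lip {ρ ρt : ℂ} (him : |ρ.im| ≤ 1) (him' : |ρt.im| ≤ 1)
    (hρ : 1 ≤ ‖ρ‖) (hρ' : 1 ≤ ‖ρt‖) :
    ∀ t ∈ Icc (0:ℝ) π, ‖φ (ρt^2) t - φ (ρ^2) t‖ * ‖ρt‖ ≤
      (Real.exp π * Real.exp π * π * Real.exp (Q * Real.exp (2 * π) * π) *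
        ((‖h‖ + 1) * Real.exp π * Real.exp (Q * Real.exp (2 * π) * π))) *
        ‖ρ^2 - ρt^2‖ := by
  set B : ℝ := (‖h‖ + 1) * Real.exp π * Real.exp (Q * Real.exp (2 * π) * π) with hB_def
  have hB0 : 0 ≤ B := by positivity
  have hBb := phi_strip q h φ φ' hinit hode1 hode2 hQ0 hq' him hρ
  have hu : ∀ t, HasDerivAt (fun s => φ (ρt^2) s - φ (ρ^2) s)
      (φ' (ρt^2) t - φ' (ρ^2) t) t := fun t => (hode1 _ t).sub (hode1 _ t)
  have hu' : ∀ t, HasDerivAt (fun s => φ' (ρt^2) s - φ' (ρ^2) s)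
      ((q t - ρt^2) * (φ (ρt^2) t - φ (ρ^2) t) + (ρ^2 - ρt^2) * φ (ρ^2) t) t := by
    intro t
    have := (hode2 (ρt^2) t).sub (hode2 (ρ^2) t)
    refine (this.congr_deriv ?_).congr_deriv rfl
    ring
  have h2 := strip_estimate q hQ0 hq' him' hρ'
    (fun s => φ (ρt^2) s - φ (ρ^2) s) (fun s => φ' (ρt^2) s - φ' (ρ^2) s)
    (fun s => (ρ^2 - ρt^2) * φ (ρ^2) s) hu hu'
    (ε₀ := ‖ρ^2 - ρt^2‖ * B) (mul_nonneg (norm_nonneg _) hB0)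
    (fun t ht => by
      rw [norm_mul]
      exact mul_le_mul_of_nonneg_left (hBb t ht) (norm_nonneg _))
    (δ₀ := 0)
    (by simp [(hinit (ρ^2)).1, (hinit (ρt^2)).1, (hinit (ρ^2)).2, (hinit (ρt^2)).2])
    (by simp [(hinit (ρ^2)).1, (hinit (ρt^2)).1, (hinit (ρ^2)).2, (hinit (ρt^2)).2])
  intro t ht
  have h3 := h2 t ht
  have hρpos : (0:ℝ) < ‖ρt‖ := by linarith
  rw [le_div_iff₀ hρpos] at h3
  calc ‖φ (ρt^2) t - φ (ρ^2) t‖ * ‖ρt‖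
      ≤ Real.exp π * ((0 + Real.exp π * (‖ρ^2 - ρt^2‖ * B) * π) *
          Real.exp (Q * Real.exp (2 * π) * π)) := h3
    _ = (Real.exp π * Real.exp π * π * Real.exp (Q * Real.exp (2 * π) * π) *
          ((‖h‖ + 1) * Real.exp π * Real.exp (Q * Real.exp (2 * π) * π))) *
          ‖ρ^2 - ρt^2‖ := by rw [hB_def]; ring

end Wrappers

/-- Lipschitz-type estimate `|D(x, λ, λ̃_n) - D(x, λ, λ_n)| ≤ C |ρ_n - ρ̃_n|` for the
kernel `D(x, λ, ξ) = ∫₀ˣ φ(t,λ) φ(t,ξ) dt`, uniformly in `x ∈ [0,π]`, `λ` in a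
compact set, and `n ≥ 1`. -/
theorem D_lipschitz_estimate (q : ℝ → ℂ) (h : ℂ)
    (hq : ContinuousOn q (Set.Icc 0 Real.pi))
    (φ φ' : ℂ → ℝ → ℂ)
    (hinit : ∀ l : ℂ, φ l 0 = 1 ∧ φ' l 0 = h)
    (hode1 : ∀ l : ℂ, ∀ x : ℝ, HasDerivAt (φ l) (φ' l x) x)
    (hode2 : ∀ l : ℂ, ∀ x : ℝ, HasDerivAt (φ' l) ((q x - l) * φ l x) x)
    (K : Set ℂ) (hK : IsCompact K) :
    ∃ C > 0, ∀ x ∈ Set.Icc 0 Real.pi, ∀ l ∈ K, ∀ n : ℕ, 1 ≤ n →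
      ∀ ρn ρtn : ℂ, 0 ≤ ρn.re → 0 ≤ ρtn.re →
        ‖ρn - (n : ℂ)‖ ≤ 1 → ‖ρtn - (n : ℂ)‖ ≤ 1 →
        ‖(∫ t in (0:ℝ)..x, φ l t * φ (ρtn ^ 2) t) -
            ∫ t in (0:ℝ)..x, φ l t * φ (ρn ^ 2) t‖ ≤ C * ‖ρn - ρtn‖ := by
  -- bound for q
  obtain ⟨Q₀, hQ₀⟩ := isCompact_Icc.exists_bound_of_continuousOn hq
  set Q : ℝ := max Q₀ 0 with hQ_def
  have hQ0 : (0:ℝ) ≤ Q := le_max_right _ _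
  have hq' : ∀ t ∈ Icc (0:ℝ) π, ‖q t‖ ≤ Q := fun t ht =>
    le_trans (hQ₀ t ht) (le_max_left _ _)
  -- bound for K
  obtain ⟨R₀, hR₀⟩ := hK.isBounded.exists_norm_le
  set R : ℝ := max R₀ 0 with hR_def
  have hR0 : (0:ℝ) ≤ R := le_max_right _ _
  have hR' : ∀ l ∈ K, ‖l‖ ≤ R := fun l hl => le_trans (hR₀ l hl) (le_max_left _ _)
  -- constants
  set AK : ℝ := (1 + ‖h‖) * Real.exp ((1 + Q + R) * π) with hAK_def
  set Cb : ℝ := (1 + ‖h‖) * Real.exp ((1 + Q + 9) * π) * π * Real.exp ((1 + Q + 9) * π)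
    with hCb_def
  set Cd : ℝ := Real.exp π * Real.exp π * π * Real.exp (Q * Real.exp (2 * π) * π) *
    ((‖h‖ + 1) * Real.exp π * Real.exp (Q * Real.exp (2 * π) * π)) with hCd_def
  set M : ℝ := max (4 * Cb) (6 * Cd) with hM_def
  have hCb0 : 0 ≤ Cb := by rw [hCb_def]; positivity
  have hCd0 : 0 ≤ Cd := by rw [hCd_def]; positivity
  have hM0 : 0 ≤ M := le_trans (by linarith) (le_max_left _ _)
  have hAK0 : 0 < AK := by rw [hAK_def]; positivity
  refine ⟨π * AK * M + 1, by positivity, ?_⟩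
  intro x hx l hl n hn ρ ρt _hre _hret hρn hρtn
  -- continuity of φ
  have hφc : ∀ m : ℂ, Continuous (φ m) := fun m =>
    continuous_iff_continuousAt.2 fun t => (hode1 m t).continuousAt
  -- the key pointwise Lipschitz bound
  have hδ : ∀ t ∈ Icc (0:ℝ) π, ‖φ (ρt^2) t - φ (ρ^2) t‖ ≤ M * ‖ρ - ρt‖ := by
    have hsq : ρ^2 - ρt^2 = (ρ - ρt) * (ρ + ρt) := by ring
    rcases Nat.lt_or_ge n 2 with hn2 | hn2
    · -- n = 1 : crude regime
      interval_cases n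
      have hρ2 : ‖ρ‖ ≤ 2 := by
        have h1 := norm_sub_norm_le ρ ((1:ℕ) : ℂ)
        simp only [Nat.cast_one] at h1 hρn
        rw [norm_one] at h1
        linarith
      have hρt2 : ‖ρt‖ ≤ 2 := by
        have h1 := norm_sub_norm_le ρt ((1:ℕ) : ℂ)
        simp only [Nat.cast_one] at h1 hρtn
        rw [norm_one] at h1
        linarith
      have h9 : ‖ρ^2‖ ≤ 9 := by
        rw [norm_pow]; nlinarith [norm_nonneg ρ]
      have h9' : ‖ρt^2‖ ≤ 9 := by
        rw [norm_pow]; nlinarith [norm_nonneg ρt]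
      intro t ht
      have h1 := phi_crude_lip q h φ φ' hinit hode1 hode2 hQ0 hq' h9 h9' t ht
      have h2 : ‖ρ^2 - ρt^2‖ ≤ ‖ρ - ρt‖ * 4 := by
        rw [hsq, norm_mul]
        have : ‖ρ + ρt‖ ≤ 4 := le_trans (norm_add_le _ _) (by linarith)
        exact mul_le_mul_of_nonneg_left this (norm_nonneg _)
      calc ‖φ (ρt^2) t - φ (ρ^2) t‖
          ≤ ‖ρ^2 - ρt^2‖ * ((1 + ‖h‖) * Real.exp ((1 + Q + 9) * π)) * π *
            Real.exp ((1 + Q + 9) * π) := h1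
        _ = ‖ρ^2 - ρt^2‖ * Cb := by rw [hCb_def]; ring
        _ ≤ (‖ρ - ρt‖ * 4) * Cb := mul_le_mul_of_nonneg_right h2 hCb0
        _ = (4 * Cb) * ‖ρ - ρt‖ := by ring
        _ ≤ M * ‖ρ - ρt‖ := mul_le_mul_of_nonneg_right (le_max_left _ _) (norm_nonneg _)
    · -- n ≥ 2 : strip regime
      have hncast : (2:ℝ) ≤ (n:ℝ) := by exact_mod_cast hn2
      have hnorm_n : ‖((n:ℕ) : ℂ)‖ = (n:ℝ) := by simp
      have hρlow : (n:ℝ) - 1 ≤ ‖ρ‖ := by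
        have h1 := norm_sub_norm_le ((n:ℂ)) ρ
        rw [norm_sub_rev, hnorm_n] at h1
        linarith
      have hρtlow : (n:ℝ) - 1 ≤ ‖ρt‖ := by
        have h1 := norm_sub_norm_le ((n:ℂ)) ρt
        rw [norm_sub_rev, hnorm_n] at h1
        linarith
      have hρhigh : ‖ρ‖ ≤ (n:ℝ) + 1 := by
        have h1 := norm_sub_norm_le ρ ((n:ℂ))
        rw [hnorm_n] at h1
        linarith
      have hρthigh : ‖ρt‖ ≤ (n:ℝ) + 1 := by
        have h1 := norm_sub_norm_le ρt ((n:ℂ))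
        rw [hnorm_n] at h1
        linarith
      have hρ1 : 1 ≤ ‖ρ‖ := by linarith
      have hρt1 : 1 ≤ ‖ρt‖ := by linarith
      have him : |ρ.im| ≤ 1 := by
        have h1 : (ρ - (n:ℂ)).im = ρ.im := by simp
        have h2 := Complex.abs_im_le_norm (ρ - (n:ℂ))
        rw [h1] at h2
        linarith
      have him' : |ρt.im| ≤ 1 := by
        have h1 : (ρt - (n:ℂ)).im = ρt.im := by simp
        have h2 := Complex.abs_im_le_norm (ρt - (n:ℂ))
        rw [h1] at h2
        linarith
      intro t ht
      have h1 := phi_strip_lip q h φ φ' hinit hode1 hode2 hQ0 hq' him him' hρ1 hρt1 t ht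
      have hsum : ‖ρ + ρt‖ ≤ 6 * ‖ρt‖ := by
        have h2 : ‖ρ + ρt‖ ≤ 2 * (n:ℝ) + 2 := le_trans (norm_add_le _ _) (by linarith)
        have h3 : 2 * (n:ℝ) + 2 ≤ 6 * ((n:ℝ) - 1) := by linarith
        linarith [mul_le_mul_of_nonneg_left hρtlow (by norm_num : (0:ℝ) ≤ 6)]
      have hρtpos : (0:ℝ) < ‖ρt‖ := by linarith
      have key : ‖φ (ρt^2) t - φ (ρ^2) t‖ * ‖ρt‖ ≤ (M * ‖ρ - ρt‖) * ‖ρt‖ := by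
        calc ‖φ (ρt^2) t - φ (ρ^2) t‖ * ‖ρt‖
            ≤ Cd * ‖ρ^2 - ρt^2‖ := by rw [hCd_def]; exact h1
          _ = Cd * (‖ρ - ρt‖ * ‖ρ + ρt‖) := by rw [hsq, norm_mul]
          _ ≤ Cd * (‖ρ - ρt‖ * (6 * ‖ρt‖)) := by
              exact mul_le_mul_of_nonneg_left
                (mul_le_mul_of_nonneg_left hsum (norm_nonneg _)) hCd0
          _ = ((6 * Cd) * ‖ρ - ρt‖) * ‖ρt‖ := by ring
          _ ≤ (M * ‖ρ - ρt‖) * ‖ρt‖ := by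
              have := mul_le_mul_of_nonneg_right
                (mul_le_mul_of_nonneg_right (le_max_right (4*Cb) (6*Cd)) (norm_nonneg (ρ - ρt)))
                (norm_nonneg ρt)
              exact this
      exact le_of_mul_le_mul_right key hρtpos
  -- bound for φ l on [0, π]
  have hφl : ∀ t ∈ Icc (0:ℝ) π, ‖φ l t‖ ≤ AK := by
    rw [hAK_def]
    exact phi_crude q h φ φ' hinit hode1 hode2 hQ0 hq' hR0 (hR' l hl)
  -- rewrite difference of integrals
  have hint1 : IntervalIntegrable (fun t => φ l t * φ (ρt^2) t) MeasureTheory.volume 0 x :=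
    ((hφc l).mul (hφc _)).intervalIntegrable 0 x
  have hint2 : IntervalIntegrable (fun t => φ l t * φ (ρ^2) t) MeasureTheory.volume 0 x :=
    ((hφc l).mul (hφc _)).intervalIntegrable 0 x
  rw [← intervalIntegral.integral_sub hint1 hint2]
  have hbound : ∀ t ∈ Set.uIoc (0:ℝ) x,
      ‖φ l t * φ (ρt^2) t - φ l t * φ (ρ^2) t‖ ≤ AK * (M * ‖ρ - ρt‖) := by
    intro t ht
    rw [Set.uIoc_of_le hx.1] at ht
    have ht' : t ∈ Icc (0:ℝ) π := ⟨ht.1.le, le_trans ht.2 hx.2⟩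
    have h1 : φ l t * φ (ρt^2) t - φ l t * φ (ρ^2) t = φ l t * (φ (ρt^2) t - φ (ρ^2) t) := by
      ring
    rw [h1, norm_mul]
    exact mul_le_mul (hφl t ht') (hδ t ht') (norm_nonneg _) hAK0.le
  calc ‖∫ t in (0:ℝ)..x, (φ l t * φ (ρt^2) t - φ l t * φ (ρ^2) t)‖
      ≤ AK * (M * ‖ρ - ρt‖) * |x - 0| :=
        intervalIntegral.norm_integral_le_of_norm_le_const hbound
    _ ≤ (π * AK * M + 1) * ‖ρ - ρt‖ := by
        rw [sub_zero, abs_of_nonneg hx.1]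
        nlinarith [norm_nonneg (ρ - ρt), hx.2, hx.1,
          mul_le_mul_of_nonneg_left hx.2 (mul_nonneg (mul_nonneg hAK0.le hM0) (norm_nonneg (ρ - ρt)))]
end
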